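/- arXiv:1507.02051 — 5 statements merged into one kernel-verified Lean document; each statement's English description precedes it below -/
import Mathlib

section
/- Assume that f0⁺(y) > 0 for every y ∈ Y such that A*y = 0, S y = 0, and not (f0⁺(y) = 0 and f0⁺(−y) = 0). Then the y-subproblem is solvable: there exists ŷ ∈ dom f such that F(ŷ) ≤ F(y) for all y ∈ Y. -/
open scoped RealInnerProductSpace
open Filter Bornology

noncomputable section

variable {X Y Z : Type*}
variable [NormedAddCommGroup X] [InnerProductSpace ℝ X] [FiniteDimensional ℝ X]
variable [NormedAddCommGroup Y] [InnerProductSpace ℝ Y] [FiniteDimensional ℝ Y]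
variable [NormedAddCommGroup Z] [InnerProductSpace ℝ Z] [FiniteDimensional ℝ Z]

/-- `f : E → ℝ ∪ {+∞}` is proper, convex and lower semicontinuous. -/
def ProperConvexLsc {E : Type*} [NormedAddCommGroup E] [InnerProductSpace ℝ E]
    (f : E → EReal) : Prop :=
  (∃ u, f u ≠ ⊤) ∧ (∀ u, f u ≠ ⊥) ∧
    (∀ u v : E, ∀ a b : ℝ, 0 ≤ a → 0 ≤ b → a + b = 1 →
      f (a • u + b • v) ≤ (a : EReal) * f u + (b : EReal) * f v) ∧
    LowerSemicontinuous f

/-- `frec` is the recession function of `f`:  for any `u₀` in the effective domain of `f`,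
`frec u = lim_{ρ → +∞} (f (u₀ + ρ u) - f u₀) / ρ`. -/
def IsRecessionFn {E : Type*} [NormedAddCommGroup E] [InnerProductSpace ℝ E]
    (f : E → EReal) (frec : E → EReal) : Prop :=
  ∀ u₀ : E, f u₀ ≠ ⊤ → ∀ u : E,
    Tendsto (fun ρ : ℝ => (f (u₀ + ρ • u) - f u₀) * ((ρ⁻¹ : ℝ) : EReal))
      atTop (nhds (frec u))

/-- The augmented Lagrangian `L_σ(y, z; x)` of the problem
`min f(y) + g(z)  s.t.  A* y + B* z = c`. -/
def augL (f : Y → EReal) (g : Z → EReal) (A : X →ₗ[ℝ] Y) (B : X →ₗ[ℝ] Z)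
    (c : X) (σ : ℝ) (y : Y) (z : Z) (x : X) : EReal :=
  f y + g z + ((⟪x, (LinearMap.adjoint A) y + (LinearMap.adjoint B) z - c⟫ : ℝ) : EReal)
    + ((σ / 2 * ‖(LinearMap.adjoint A) y + (LinearMap.adjoint B) z - c‖ ^ 2 : ℝ) : EReal)

/-- Objective of the `y`-subproblem:  `F(w) = L_σ(w, z'; x') + (1/2) ‖w - y'‖_S²`. -/
def ysub (f : Y → EReal) (g : Z → EReal) (A : X →ₗ[ℝ] Y) (B : X →ₗ[ℝ] Z)
    (c : X) (σ : ℝ) (S : Y →ₗ[ℝ] Y) (x' : X) (y' : Y) (z' : Z) (w : Y) : EReal :=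
  augL f g A B c σ w z' x' + ((⟪w - y', S (w - y')⟫ / 2 : ℝ) : EReal)

/-- Objective of the `z`-subproblem:  `G(w) = L_σ(y', w; x') + (1/2) ‖w - z'‖_T²`. -/
def zsub (f : Y → EReal) (g : Z → EReal) (A : X →ₗ[ℝ] Y) (B : X →ₗ[ℝ] Z)
    (c : X) (σ : ℝ) (T : Z →ₗ[ℝ] Z) (x' : X) (y' : Y) (z' : Z) (w : Z) : EReal :=
  augL f g A B c σ y' w x' + ((⟪w - z', T (w - z')⟫ / 2 : ℝ) : EReal)

open Topology

section AuxLemmas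
variable {E : Type*} [NormedAddCommGroup E] [InnerProductSpace ℝ E]

lemma psd_apply_eq_zero (S : E →ₗ[ℝ] E) (hsym : S.IsSymmetric)
    (hpsd : ∀ w : E, 0 ≤ ⟪w, S w⟫) {d : E} (hd : ⟪d, S d⟫ = 0) : S d = 0 := by
  by_contra hne
  have ha : (0:ℝ) < ⟪S d, S d⟫ := by
    rw [real_inner_self_eq_norm_sq]
    exact pow_pos (norm_pos_iff.2 hne) 2
  have hC : (0:ℝ) ≤ ⟪S d, S (S d)⟫ := hpsd (S d)
  have hsy : ⟪d, S (S d)⟫ = ⟪S d, S d⟫ := (hsym d (S d)).symm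
  have key : ∀ t : ℝ, 0 ≤ 2 * t * ⟪S d, S d⟫ + t ^ 2 * ⟪S d, S (S d)⟫ := by
    intro t
    have h0 := hpsd (d + t • S d)
    simp only [map_add, map_smul, inner_add_left, inner_add_right, real_inner_smul_left,
      real_inner_smul_right] at h0
    rw [hd, hsy] at h0
    nlinarith [h0]
  set a : ℝ := ⟪S d, S d⟫
  set C : ℝ := ⟪S d, S (S d)⟫
  rcases hC.eq_or_lt with hC0 | hC0
  · have h1 := key (-1)
    rw [← hC0] at h1
    nlinarith
  · have h1 := key (-(a / C))
    have h2 : 2 * -(a / C) * a + (-(a / C)) ^ 2 * C = -(a ^ 2 / C) := by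
      field_simp
      ring
    rw [h2] at h1
    nlinarith [div_pos (pow_pos ha 2) hC0]

lemma lsc_exists_min_on_compact {K : Set E} (hK : IsCompact K) (hne : K.Nonempty)
    {F : E → EReal} (hF : LowerSemicontinuous F) :
    ∃ x ∈ K, ∀ y ∈ K, F x ≤ F y := by
  obtain ⟨u, -, hu_t, hu_mem⟩ := exists_seq_tendsto_sInf (hne.image F) ⟨⊥, fun x _ => bot_le⟩
  choose x hxK hxF using hu_mem
  obtain ⟨xh, hxhK, φ, hφ, hconv⟩ := hK.tendsto_subseq hxK
  refine ⟨xh, hxhK, fun y hy => ?_⟩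
  have h1 : F xh ≤ sInf (F '' K) := by
    by_contra h
    push_neg at h
    obtain ⟨b, hb1, hb2⟩ := exists_between h
    have hev2 : ∀ᶠ n in atTop, b < F (x (φ n)) := hconv.eventually (hF xh b hb2)
    have hu' : Tendsto (fun n => u (φ n)) atTop (𝓝 (sInf (F '' K))) :=
      hu_t.comp hφ.tendsto_atTop
    have hble : b ≤ sInf (F '' K) := by
      refine ge_of_tendsto hu' (hev2.mono fun n hn => ?_)
      rw [hxF (φ n)] at hn
      exact hn.le
    exact absurd (hble.trans_lt hb1) (lt_irrefl _)
  exact h1.trans (sInf_le ⟨y, hy, rfl⟩)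

lemma conv_combo {f : E → EReal}
    (hconv : ∀ u v : E, ∀ a b : ℝ, 0 ≤ a → 0 ≤ b → a + b = 1 →
      f (a • u + b • v) ≤ (a : EReal) * f u + (b : EReal) * f v)
    (hbot : ∀ u, f u ≠ ⊥) {u v : E} {a b : ℝ} (ha : 0 ≤ a) (hb : 0 ≤ b) (hab : a + b = 1)
    {M : EReal} (hu : f u ≤ M) (hv : f v ≤ M) : f (a • u + b • v) ≤ M := by
  by_cases hM : M = ⊤
  · simp [hM]
  have hMb : M ≠ ⊥ := fun h => hbot u (le_bot_iff.1 (h ▸ hu))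
  obtain ⟨Mr, hMr⟩ : ∃ r : ℝ, M = (r : EReal) := ⟨M.toReal, (EReal.coe_toReal hM hMb).symm⟩
  obtain ⟨ru, hur⟩ : ∃ r : ℝ, f u = (r : EReal) :=
    ⟨(f u).toReal, (EReal.coe_toReal (fun h => hM (top_le_iff.1 (h ▸ hu))) (hbot u)).symm⟩
  obtain ⟨rv, hvr⟩ : ∃ r : ℝ, f v = (r : EReal) :=
    ⟨(f v).toReal, (EReal.coe_toReal (fun h => hM (top_le_iff.1 (h ▸ hv))) (hbot v)).symm⟩
  rw [hMr, hur] at hu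
  rw [hMr, hvr] at hv
  rw [EReal.coe_le_coe_iff] at hu hv
  calc f (a • u + b • v) ≤ (a : EReal) * f u + (b : EReal) * f v := hconv u v a b ha hb hab
    _ = ((a * ru + b * rv : ℝ) : EReal) := by
        rw [hur, hvr, ← EReal.coe_mul, ← EReal.coe_mul, ← EReal.coe_add]
    _ ≤ M := by
        rw [hMr, EReal.coe_le_coe_iff]
        have h3 : a * Mr + b * Mr = Mr := by rw [← add_mul, hab, one_mul]
        nlinarith [mul_le_mul_of_nonneg_left hu ha, mul_le_mul_of_nonneg_left hv hb]

end AuxLemmas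

/-- recession ≤ 0 implies descent direction -/
lemma translate_le {E : Type*} [NormedAddCommGroup E] [InnerProductSpace ℝ E] {f : E → EReal}
    (hconv : ∀ u v : E, ∀ a b : ℝ, 0 ≤ a → 0 ≤ b → a + b = 1 →
      f (a • u + b • v) ≤ (a : EReal) * f u + (b : EReal) * f v)
    (hbot : ∀ u, f u ≠ ⊥) {frec : E → EReal}
    (hfrec : ∀ u₀ : E, f u₀ ≠ ⊤ → ∀ u : E,
      Tendsto (fun ρ : ℝ => (f (u₀ + ρ • u) - f u₀) * ((ρ⁻¹ : ℝ) : EReal))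
        atTop (nhds (frec u)))
    {d : E} (hd : frec d ≤ 0) : ∀ x : E, f (x + d) ≤ f x := by
  intro x
  by_cases hx : f x = ⊤
  · simp [hx]
  obtain ⟨rx, hrx⟩ : ∃ r : ℝ, f x = (r : EReal) :=
    ⟨(f x).toReal, (EReal.coe_toReal hx (hbot x)).symm⟩
  have key : ∀ ρ : ℝ, 1 ≤ ρ →
      f (x + d) - f x ≤ (f (x + ρ • d) - f x) * ((ρ⁻¹ : ℝ) : EReal) := by
    intro ρ hρ
    have hρ0 : 0 < ρ := lt_of_lt_of_le one_pos hρ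
    by_cases htop : f (x + ρ • d) = ⊤
    · rw [htop, hrx, EReal.top_sub_coe]
      rw [EReal.top_mul_coe_of_pos (by positivity)]
      exact le_top
    obtain ⟨rs, hrs⟩ : ∃ r : ℝ, f (x + ρ • d) = (r : EReal) :=
      ⟨_, (EReal.coe_toReal htop (hbot _)).symm⟩
    have hcomb : (1 - ρ⁻¹) • x + ρ⁻¹ • (x + ρ • d) = x + d := by
      rw [smul_add, smul_smul, inv_mul_cancel₀ (ne_of_gt hρ0)]
      module
    have h1 := hconv x (x + ρ • d) (1 - ρ⁻¹) ρ⁻¹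
      (by rw [sub_nonneg]; exact inv_le_one_of_one_le₀ hρ) (by positivity) (by ring)
    rw [hcomb, hrx, hrs] at h1
    rw [hrx, hrs]
    have h2 : f (x + d) ≤ (((1 - ρ⁻¹) * rx + ρ⁻¹ * rs : ℝ) : EReal) :=
      h1.trans_eq (by rw [← EReal.coe_mul, ← EReal.coe_mul, ← EReal.coe_add])
    calc f (x + d) - (rx : EReal) ≤ (((1 - ρ⁻¹) * rx + ρ⁻¹ * rs : ℝ) : EReal) - (rx : EReal) :=
          EReal.sub_le_sub h2 le_rfl
      _ = (((1 - ρ⁻¹) * rx + ρ⁻¹ * rs - rx : ℝ) : EReal) := by rw [← EReal.coe_sub]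
      _ = (((rs - rx) * ρ⁻¹ : ℝ) : EReal) := by norm_cast; ring
      _ = ((rs : EReal) - (rx : EReal)) * ((ρ⁻¹ : ℝ) : EReal) := by
          rw [← EReal.coe_sub, ← EReal.coe_mul]
  have hle : f (x + d) - f x ≤ frec d :=
    ge_of_tendsto (hfrec x hx d) ((eventually_ge_atTop 1).mono key)
  have hle0 : f (x + d) - f x ≤ 0 := hle.trans hd
  rw [hrx] at hle0 ⊢
  have := (EReal.sub_le_iff_le_add (a := f (x + d)) (b := (rx:EReal)) (c := (0:EReal))
    (Or.inl (by simp)) (Or.inl (by simp))).1 hle0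
  simpa using this


lemma translate_smul {E : Type*} [NormedAddCommGroup E] [InnerProductSpace ℝ E] {f : E → EReal}
    (hconv : ∀ u v : E, ∀ a b : ℝ, 0 ≤ a → 0 ≤ b → a + b = 1 →
      f (a • u + b • v) ≤ (a : EReal) * f u + (b : EReal) * f v)
    (hbot : ∀ u, f u ≠ ⊥) {d : E}
    (hd : ∀ x, f (x + d) ≤ f x) : ∀ c : ℝ, 0 ≤ c → ∀ x, f (x + c • d) ≤ f x := by
  have hnat : ∀ n : ℕ, ∀ x, f (x + (n : ℝ) • d) ≤ f x := by
    intro n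
    induction n with
    | zero => intro x; simp
    | succ n ih =>
      intro x
      have hre : x + ((n + 1 : ℕ) : ℝ) • d = (x + (n : ℝ) • d) + d := by
        push_cast
        rw [add_smul]
        module
      rw [hre]
      exact (hd _).trans (ih x)
  have hfrac : ∀ s : ℝ, 0 ≤ s → s ≤ 1 → ∀ x, f (x + s • d) ≤ f x := by
    intro s hs0 hs1 x
    have hco : x + s • d = (1 - s) • x + s • (x + d) := by module
    rw [hco]
    exact conv_combo hconv hbot (by linarith) hs0 (by ring) le_rfl (hd x)
  intro c hc x
  have hsc : (⌊c⌋₊ : ℝ) + (c - ⌊c⌋₊) = c := by ring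
  have h1 : x + c • d = (x + (⌊c⌋₊ : ℝ) • d) + (c - ⌊c⌋₊) • d := by
    rw [add_assoc, ← add_smul, hsc]
  rw [h1]
  exact (hfrac _ (sub_nonneg.2 (Nat.floor_le hc)) (by have := Nat.lt_floor_add_one c; linarith)
    _).trans (hnat _ x)

open Topology

set_option maxHeartbeats 2000000 in
/-- **Proposition 1(a), y-part.**  If `f0⁺(w) > 0` for every `w` with `A* w = 0`, `S w = 0`
and not (`f0⁺(w) = 0` and `f0⁺(-w) = 0`), then the `y`-subproblem is solvable. -/
theorem stmt_1
    (f : Y → EReal) (g : Z → EReal)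
    (hf : ProperConvexLsc f) (hg : ProperConvexLsc g)
    (A : X →ₗ[ℝ] Y) (B : X →ₗ[ℝ] Z) (c : X)
    (σ : ℝ) (hσ : 0 < σ)
    (S : Y →ₗ[ℝ] Y) (hSsym : S.IsSymmetric) (hSpsd : ∀ w : Y, 0 ≤ ⟪w, S w⟫)
    (T : Z →ₗ[ℝ] Z) (hTsym : T.IsSymmetric) (hTpsd : ∀ w : Z, 0 ≤ ⟪w, T w⟫)
    (x' : X) (y' : Y) (z' : Z) (hy' : f y' ≠ ⊤) (hz' : g z' ≠ ⊤)
    (frec : Y → EReal) (hfrec : IsRecessionFn f frec)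
    (hass : ∀ w : Y, (LinearMap.adjoint A) w = 0 → S w = 0 →
      ¬(frec w = 0 ∧ frec (-w) = 0) → 0 < frec w) :
    ∃ yhat : Y, f yhat ≠ ⊤ ∧
      ∀ w : Y, ysub f g A B c σ S x' y' z' yhat ≤ ysub f g A B c σ S x' y' z' w := by
  obtain ⟨-, hfbot, hfconv, hflsc⟩ := hf
  have hgzb : g z' ≠ ⊥ := hg.2.1 z'
  set Aa : Y →ₗ[ℝ] X := LinearMap.adjoint A with hAa
  set Bb : Z →ₗ[ℝ] X := LinearMap.adjoint B with hBb
  set ψ : Y → ℝ := fun w =>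
    (g z').toReal + ⟪x', Aa w + Bb z' - c⟫ + σ / 2 * ‖Aa w + Bb z' - c‖ ^ 2
      + ⟪w - y', S (w - y')⟫ / 2 with hψdef
  set F : Y → EReal := fun w => f w + ((ψ w : ℝ) : EReal) with hFdef
  have hψw : ∀ w, ψ w = (g z').toReal + ⟪x', Aa w + Bb z' - c⟫
      + σ / 2 * ‖Aa w + Bb z' - c‖ ^ 2 + ⟪w - y', S (w - y')⟫ / 2 := fun w => rfl
  have hFw : ∀ w, F w = f w + ((ψ w : ℝ) : EReal) := fun w => rfl
  have hysub : ∀ w, ysub f g A B c σ S x' y' z' w = F w := by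
    intro w
    simp only [ysub, augL, hFw w, hψw w, ← hAa, ← hBb]
    rw [show g z' = (((g z').toReal : ℝ) : EReal) from (EReal.coe_toReal hz' hgzb).symm]
    rw [EReal.coe_add, EReal.coe_add, EReal.coe_add]
    simp only [add_assoc, EReal.toReal_coe]
  have hFbot : ∀ w, F w ≠ ⊥ := by
    intro w h
    rw [hFw w, EReal.add_eq_bot_iff] at h
    exact h.elim (hfbot w) (EReal.coe_ne_bot _)
  have hftop_iff : ∀ w, F w = ⊤ ↔ f w = ⊤ := by
    intro w
    constructor
    · intro h
      by_contra hne
      obtain ⟨r, hr⟩ : ∃ r : ℝ, f w = (r : EReal) :=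
        ⟨(f w).toReal, (EReal.coe_toReal hne (hfbot w)).symm⟩
      rw [hFw w, hr, ← EReal.coe_add] at h
      exact EReal.coe_ne_top _ h
    · intro h
      rw [hFw w, h, EReal.top_add_coe]
  have hψcont : Continuous ψ := by
    have hAc : Continuous fun w : Y => Aa w + Bb z' - c :=
      ((Aa.continuous_of_finiteDimensional).add continuous_const).sub continuous_const
    have h1 : Continuous fun w : Y => ⟪x', Aa w + Bb z' - c⟫ :=
      Continuous.inner continuous_const hAc
    have h2 : Continuous fun w : Y => σ / 2 * ‖Aa w + Bb z' - c‖ ^ 2 :=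
      continuous_const.mul ((hAc.norm).pow 2)
    have h3 : Continuous fun w : Y => ⟪w - y', S (w - y')⟫ / 2 :=
      (Continuous.inner (continuous_id.sub continuous_const)
        (S.continuous_of_finiteDimensional.comp (continuous_id.sub continuous_const))).div_const 2
    exact ((continuous_const.add h1).add h2).add h3
  have hFlsc : LowerSemicontinuous F := by
    refine LowerSemicontinuous.add' hflsc
      ((continuous_coe_real_ereal.comp hψcont).lowerSemicontinuous) (fun w => ?_)
    exact EReal.continuousAt_add (Or.inr (EReal.coe_ne_bot _)) (Or.inr (EReal.coe_ne_top _))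
  -- the lineality space
  set Tt : Y → Prop := fun d => ∀ x : Y, f (x + d) ≤ f x with hTt
  have hTadd : ∀ {d e : Y}, Tt d → Tt e → Tt (d + e) := by
    intro d e hd he x
    rw [← add_assoc]
    exact (he _).trans (hd x)
  have hTsmul : ∀ {d : Y}, Tt d → Tt (-d) → ∀ c' : ℝ, Tt (c' • d) := by
    intro d hd hmd c'
    rcases le_or_gt 0 c' with hc | hc
    · exact fun x => translate_smul hfconv hfbot hd c' hc x
    · intro x
      have he : c' • d = (-c') • (-d) := by module
      rw [he]
      exact translate_smul hfconv hfbot hmd (-c') (by linarith) x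
  let L : Submodule ℝ Y :=
    { carrier := {d : Y | Aa d = 0 ∧ S d = 0 ∧ Tt d ∧ Tt (-d)}
      add_mem' := fun {a b} ha hb => ⟨by rw [map_add, ha.1, hb.1, add_zero],
        by rw [map_add, ha.2.1, hb.2.1, add_zero], hTadd ha.2.2.1 hb.2.2.1,
        by rw [neg_add]; exact hTadd ha.2.2.2 hb.2.2.2⟩
      zero_mem' := ⟨map_zero _, map_zero _, fun x => by simp, fun x => by simp⟩
      smul_mem' := fun c' d hd => ⟨by rw [map_smul, hd.1, smul_zero],
        by rw [map_smul, hd.2.1, smul_zero], hTsmul hd.2.2.1 hd.2.2.2 c',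
        by rw [← smul_neg]; exact hTsmul hd.2.2.2 (by rw [neg_neg]; exact hd.2.2.1) c'⟩ }
  have hLmem : ∀ d : Y, d ∈ L ↔ Aa d = 0 ∧ S d = 0 ∧ Tt d ∧ Tt (-d) := fun d => Iff.rfl
  have hLinv : ∀ v, v ∈ L → ∀ w, F (w + v) = F w := by
    intro v hv w
    obtain ⟨hAv, hSv, hTv, hTmv⟩ := (hLmem v).1 hv
    have hfeq : f (w + v) = f w := by
      refine le_antisymm (hTv w) ?_
      have := hTmv (w + v)
      rwa [add_neg_cancel_right] at this
    have hψeq : ψ (w + v) = ψ w := by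
      have h1 : Aa (w + v) = Aa w := by rw [map_add, hAv, add_zero]
      have h2 : ⟪w + v - y', S (w + v - y')⟫ = ⟪w - y', S (w - y')⟫ := by
        have h3 : w + v - y' = (w - y') + v := by abel
        have h4 : ⟪v, S (w - y')⟫ = 0 := by
          rw [← hSsym v (w - y'), hSv, inner_zero_left]
        rw [h3, map_add, hSv, add_zero, inner_add_left, h4, add_zero]
      rw [hψw (w + v), hψw w, h1, h2]
    rw [hFw (w + v), hFw w, hfeq, hψeq]
  have hproj : ∀ w : Y, ∃ v, v ∈ Lᗮ ∧ F v = F w := by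
    intro w
    refine ⟨w - (L.orthogonalProjection w : Y), Submodule.sub_starProjection_mem_orthogonal (K := L) w, ?_⟩
    conv_rhs => rw [show w = (w - (L.orthogonalProjection w : Y))
      + (L.orthogonalProjection w : Y) by abel]
    exact (hLinv _ (SetLike.coe_mem _) _).symm
  have hFy'top : F y' ≠ ⊤ := fun h => hy' ((hftop_iff y').1 h)
  set K : Set Y := {w : Y | w ∈ (Lᗮ : Submodule ℝ Y) ∧ F w ≤ F y'} with hKdef
  obtain ⟨v₀, hv₀V, hv₀F⟩ := hproj y'
  have hv₀K : v₀ ∈ K := ⟨hv₀V, le_of_eq hv₀F⟩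
  have hKclosed : IsClosed K := by
    have h1 : IsClosed ((Lᗮ : Submodule ℝ Y) : Set Y) := Submodule.closed_of_finiteDimensional _
    have h2 : IsClosed {w : Y | F w ≤ F y'} := hFlsc.isClosed_preimage (F y')
    exact h1.inter h2
  have hKbd : IsBounded K := by
    by_contra hub
    have hex : ∀ R : ℝ, ∃ x ∈ K, R < ‖x‖ := by
      intro R
      by_contra hc
      push_neg at hc
      exact hub (isBounded_iff_forall_norm_le.2 ⟨R, hc⟩)
    choose w0 hw0K hw0n using fun n : ℕ => hex ((n : ℝ) + ‖y'‖ + 1)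
    have hw0pos : ∀ n, 0 < ‖w0 n‖ := fun n => lt_of_le_of_lt (by positivity) (hw0n n)
    have hdmem : ∀ n, ‖w0 n‖⁻¹ • w0 n ∈ Metric.sphere (0 : Y) 1 := by
      intro n
      simp [norm_smul, abs_of_pos (inv_pos.2 (hw0pos n)),
        inv_mul_cancel₀ (ne_of_gt (hw0pos n))]
    obtain ⟨d, hdsph, φ, hφ, hdconv⟩ := (isCompact_sphere (0 : Y) 1).tendsto_subseq hdmem
    have hd1 : ‖d‖ = 1 := by simpa using hdsph
    set ω : ℕ → Y := fun n => w0 (φ n) with hω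
    have hωK : ∀ n, ω n ∈ K := fun n => hw0K (φ n)
    have hωlb : ∀ n : ℕ, (n : ℝ) + ‖y'‖ + 1 ≤ ‖ω n‖ := by
      intro n
      refine le_trans ?_ (hw0n (φ n)).le
      have : (n : ℝ) ≤ (φ n : ℝ) := Nat.cast_le.2 hφ.le_apply
      linarith
    have hωpos : ∀ n, 0 < ‖ω n‖ := fun n => hw0pos (φ n)
    set N : ℕ → ℝ := fun n => ‖ω n - y'‖ with hNdef
    have hNlb : ∀ n : ℕ, (n : ℝ) + 1 ≤ N n := by
      intro n
      have h1 := norm_sub_norm_le (ω n) y'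
      have h2 := hωlb n
      simp only [hNdef]
      linarith
    have hNpos : ∀ n, 0 < N n := fun n => lt_of_lt_of_le (by positivity) (hNlb n)
    have hNtop : Tendsto N atTop atTop :=
      tendsto_atTop_mono hNlb (tendsto_atTop_add_const_right _ 1 tendsto_natCast_atTop_atTop)
    have hωtop : Tendsto (fun n => ‖ω n‖) atTop atTop := by
      refine tendsto_atTop_mono (fun n => ?_)
        (tendsto_atTop_add_const_right _ 1 tendsto_natCast_atTop_atTop)
      have := hωlb n
      have := norm_nonneg y'
      linarith
    set dsq : ℕ → Y := fun n => ‖ω n‖⁻¹ • ω n with hdsq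
    have hdconv' : Tendsto dsq atTop (𝓝 d) := hdconv
    set cn : ℕ → ℝ := fun n => ‖ω n‖ / N n with hcn
    have hcn1 : Tendsto cn atTop (𝓝 1) := by
      have hb : Tendsto (fun n => ‖y'‖ / N n) atTop (𝓝 0) := tendsto_const_nhds.div_atTop hNtop
      have hsq : Tendsto (fun n => cn n - 1) atTop (𝓝 0) := by
        apply squeeze_zero_norm (fun n => ?_) hb
        have h2 : |‖ω n‖ - N n| ≤ ‖y'‖ := by
          have h3 := abs_norm_sub_norm_le (ω n) (ω n - y')
          simpa [hNdef] using h3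
        have h3 : cn n - 1 = (‖ω n‖ - N n) / N n := by
          have hne2 : N n ≠ 0 := (hNpos n).ne'
          simp only [hcn]
          rw [eq_div_iff hne2, sub_mul, one_mul, div_mul_cancel₀ _ hne2]
        rw [Real.norm_eq_abs, h3, abs_div, abs_of_pos (hNpos n)]
        gcongr
      have h4 := hsq.add (tendsto_const_nhds (x := (1:ℝ)))
      simpa using h4
    set e : ℕ → Y := fun n => (N n)⁻¹ • (ω n - y') with he
    have heconv : Tendsto e atTop (𝓝 d) := by
      have h1 : ∀ n, e n = cn n • dsq n - (N n)⁻¹ • y' := by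
        intro n
        have hne1 : ‖ω n‖ ≠ 0 := (hωpos n).ne'
        have hne2 : N n ≠ 0 := (hNpos n).ne'
        simp only [he, hdsq, hcn, smul_sub, smul_smul]
        congr 1
        congr 1
        field_simp
      have h2 : Tendsto (fun n => cn n • dsq n - (N n)⁻¹ • y') atTop (𝓝 (d - 0)) := by
        refine Tendsto.sub (by simpa using hcn1.smul hdconv') ?_
        simpa using ((tendsto_inv_atTop_zero.comp hNtop).smul_const y')
      rw [sub_zero] at h2
      exact h2.congr (fun n => (h1 n).symm)
    -- bounds from membership in K
    have hFy'bot : F y' ≠ ⊥ := hFbot y'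
    set My : ℝ := (F y').toReal with hMy
    have hFy' : F y' = (My : EReal) := (EReal.coe_toReal hFy'top hFy'bot).symm
    set ry' : ℝ := (f y').toReal with hry'
    have hfy' : f y' = (ry' : EReal) := (EReal.coe_toReal hy' (hfbot y')).symm
    have hfr : ∀ n, ∃ r : ℝ, f (ω n) = (r : EReal) := by
      intro n
      have hle := (hωK n).2
      rw [hFy'] at hle
      refine ⟨(f (ω n)).toReal, (EReal.coe_toReal (fun h => ?_) (hfbot _)).symm⟩
      rw [hFw (ω n), h, EReal.top_add_coe] at hle
      exact (EReal.coe_ne_top My) (top_le_iff.1 hle)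
    choose r hr using hfr
    have hrψ : ∀ n, r n + ψ (ω n) ≤ My := by
      intro n
      have hle := (hωK n).2
      rw [hFy', hFw (ω n), hr n, ← EReal.coe_add, EReal.coe_le_coe_iff] at hle
      exact hle
    set vn : ℕ → X := fun n => Aa (ω n) + Bb z' - c with hvn
    set q : ℕ → ℝ := fun n => ⟪ω n - y', S (ω n - y')⟫ / 2 with hq
    have hq0 : ∀ n, 0 ≤ q n := fun n => div_nonneg (hSpsd _) (by norm_num)
    set s : ℕ → ℝ := fun n => σ / 4 * ‖vn n‖ ^ 2 + q n with hs
    have hs0 : ∀ n, 0 ≤ s n := by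
      intro n
      have := hq0 n
      have h2 : 0 ≤ σ / 4 * ‖vn n‖ ^ 2 := by positivity
      simp only [hs]
      linarith
    set M₁ : ℝ := My - (g z').toReal + ‖x'‖ ^ 2 / σ with hM₁
    have hrb : ∀ n, r n ≤ M₁ - s n := by
      intro n
      have h1 := hrψ n
      have h2 : -(‖x'‖ * ‖vn n‖) ≤ ⟪x', vn n⟫ :=
        neg_le_of_abs_le (abs_real_inner_le_norm x' (vn n))
      have hkey : ‖x'‖ * ‖vn n‖ ≤ σ / 4 * ‖vn n‖ ^ 2 + ‖x'‖ ^ 2 / σ := by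
        rw [← sub_nonneg]
        have h3 : σ / 4 * ‖vn n‖ ^ 2 + ‖x'‖ ^ 2 / σ - ‖x'‖ * ‖vn n‖
            = (σ * ‖vn n‖ - 2 * ‖x'‖) ^ 2 / (4 * σ) := by
          field_simp
          ring
        rw [h3]
        positivity
      have hψn : ψ (ω n) = (g z').toReal + ⟪x', vn n⟫ + σ / 2 * ‖vn n‖ ^ 2 + q n := hψw (ω n)
      rw [hψn] at h1
      simp only [hM₁, hs]
      linarith [h1, h2, hkey]
    -- the segment/lsc engine
    have hengine : ∀ ρ : ℝ, 0 < ρ → ∀ b : ℝ, ((b : EReal) < f (y' + ρ • d)) →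
        ∀ᶠ n in atTop, b < (1 - ρ / N n) * ry' + (ρ / N n) * r n := by
      intro ρ hρ b hb
      have hpt : Tendsto (fun n => y' + ρ • e n) atTop (𝓝 (y' + ρ • d)) :=
        tendsto_const_nhds.add (heconv.const_smul ρ)
      have hev1 : ∀ᶠ n in atTop, (b : EReal) < f (y' + ρ • e n) :=
        hpt.eventually (hflsc _ _ hb)
      have hev2 : ∀ᶠ n in atTop, ρ < N n := hNtop.eventually_gt_atTop ρ
      filter_upwards [hev1, hev2] with n h1 h2
      have ht0 : 0 < ρ / N n := div_pos hρ (hNpos n)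
      have ht1 : ρ / N n < 1 := (div_lt_one (hNpos n)).2 h2
      have hcomb : y' + ρ • e n = (1 - ρ / N n) • y' + (ρ / N n) • ω n := by
        simp only [he, smul_smul]
        rw [show ρ * (N n)⁻¹ = ρ / N n from (div_eq_mul_inv ρ _).symm]
        module
      have h3 := hfconv y' (ω n) (1 - ρ / N n) (ρ / N n) (by linarith) ht0.le (by ring)
      rw [← hcomb] at h3
      rw [hfy', hr n, ← EReal.coe_mul, ← EReal.coe_mul, ← EReal.coe_add] at h3
      exact_mod_cast h1.trans_le h3
    -- part B : A* d = 0 and ⟨d, S d⟩ = 0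
    have hABd : Aa d = 0 ∧ ⟪d, S d⟫ = 0 := by
      by_contra hBC
      have hsN : Tendsto (fun n => s n / N n) atTop atTop := by
        rcases not_and_or.1 hBC with hA | hS'
        · have hα : 0 < ‖Aa d‖ := norm_pos_iff.2 (fun h => hA h)
          have hratio : ∀ n, ‖vn n‖ / ‖ω n‖ = ‖Aa (dsq n) + ‖ω n‖⁻¹ • (Bb z' - c)‖ := by
            intro n
            have hid : Aa (dsq n) + ‖ω n‖⁻¹ • (Bb z' - c) = ‖ω n‖⁻¹ • vn n := by
              simp only [hdsq, hvn, map_smul, smul_sub, smul_add]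
              module
            rw [hid, norm_smul, Real.norm_eq_abs, abs_of_pos (inv_pos.2 (hωpos n)),
              inv_mul_eq_div]
          have hvα : Tendsto (fun n => ‖vn n‖ / ‖ω n‖) atTop (𝓝 ‖Aa d‖) := by
            have h1 : Tendsto (fun n => Aa (dsq n)) atTop (𝓝 (Aa d)) :=
              (Aa.continuous_of_finiteDimensional.tendsto d).comp hdconv'
            have h2 : Tendsto (fun n => ‖ω n‖⁻¹ • (Bb z' - c)) atTop (𝓝 0) := by
              simpa using (tendsto_inv_atTop_zero.comp hωtop).smul_const (Bb z' - c)
            have h3 := (h1.add h2).norm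
            rw [add_zero] at h3
            exact h3.congr (fun n => (hratio n).symm)
          have hkey : ∀ n, σ / 4 * ((‖vn n‖ / ‖ω n‖) ^ 2 * cn n * ‖ω n‖) ≤ s n / N n := by
            intro n
            have hid : (‖vn n‖ / ‖ω n‖) ^ 2 * cn n * ‖ω n‖ = ‖vn n‖ ^ 2 / N n := by
              have hne1 : ‖ω n‖ ≠ 0 := (hωpos n).ne'
              have hne2 : N n ≠ 0 := (hNpos n).ne'
              simp only [hcn]
              field_simp
            rw [hid]
            have h5 : s n / N n = σ / 4 * (‖vn n‖ ^ 2 / N n) + q n / N n := by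
              have hne2 : N n ≠ 0 := (hNpos n).ne'
              simp only [hs]
              field_simp
            rw [h5]
            have h6 : 0 ≤ q n / N n := div_nonneg (hq0 n) (hNpos n).le
            linarith
          refine tendsto_atTop_mono hkey ?_
          refine Tendsto.const_mul_atTop (by linarith) ?_
          exact Tendsto.pos_mul_atTop (by nlinarith [hα]) ((hvα.pow 2).mul hcn1) hωtop
        · have hβ : 0 < ⟪d, S d⟫ := lt_of_le_of_ne (hSpsd d) (Ne.symm hS')
          have hqe : Tendsto (fun n => ⟪e n, S (e n)⟫ / 2) atTop (𝓝 (⟪d, S d⟫ / 2)) :=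
            (heconv.inner ((S.continuous_of_finiteDimensional.tendsto d).comp heconv)).div_const 2
          have hkey : ∀ n, ⟪e n, S (e n)⟫ / 2 * N n ≤ s n / N n := by
            intro n
            have hw : ω n - y' = N n • e n := by
              simp only [he, smul_smul]
              rw [mul_inv_cancel₀ (hNpos n).ne', one_smul]
            have hid : q n = ⟪e n, S (e n)⟫ / 2 * N n ^ 2 := by
              simp only [hq]
              rw [hw, map_smul, real_inner_smul_left, real_inner_smul_right]
              ring
            have h5 : q n / N n = ⟪e n, S (e n)⟫ / 2 * N n := by
              have hne2 : N n ≠ 0 := (hNpos n).ne'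
              rw [hid]
              field_simp
            rw [← h5]
            have h6 : 0 ≤ σ / 4 * ‖vn n‖ ^ 2 := by positivity
            have h7 : s n / N n = σ / 4 * ‖vn n‖ ^ 2 / N n + q n / N n := by
              have hne2 : N n ≠ 0 := (hNpos n).ne'
              simp only [hs]
              field_simp
            rw [h7]
            have h8 : 0 ≤ σ / 4 * ‖vn n‖ ^ 2 / N n := div_nonneg h6 (hNpos n).le
            linarith
          exact tendsto_atTop_mono hkey (Tendsto.pos_mul_atTop (by linarith) hqe hNtop)
      obtain ⟨b, -, hb_lt⟩ :=
        EReal.exists_between_coe_real (bot_lt_iff_ne_bot.2 (hfbot (y' + (1:ℝ) • d)))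
      have hE := hengine 1 one_pos b hb_lt
      have hub2 : Tendsto (fun n => ((1 - 1 / N n) * ry' + (1 / N n) * M₁) + -(1 / N n * s n))
          atTop atBot := by
        have hz : Tendsto (fun n => 1 / N n) atTop (𝓝 0) := tendsto_const_nhds.div_atTop hNtop
        have h1 : Tendsto (fun n => (1 - 1 / N n) * ry' + (1 / N n) * M₁) atTop
            (𝓝 ((1 - 0) * ry' + 0 * M₁)) :=
          ((tendsto_const_nhds.sub hz).mul tendsto_const_nhds).add (hz.mul tendsto_const_nhds)
        have h2 : Tendsto (fun n => 1 / N n * s n) atTop atTop := by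
          refine hsN.congr (fun n => ?_)
          rw [div_eq_mul_inv, one_div, mul_comm]
        exact h1.add_atBot (tendsto_neg_atTop_atBot.comp h2)
      have hev3 : ∀ᶠ n in atTop, (1 - 1 / N n) * ry' + (1 / N n) * r n < b := by
        filter_upwards [hub2.eventually_lt_atBot b] with n hn
        have h4 : 0 ≤ 1 / N n := (div_pos one_pos (hNpos n)).le
        have h5 := mul_le_mul_of_nonneg_left (hrb n) h4
        nlinarith [h5, hn]
      obtain ⟨n, h1, h2⟩ := (hE.and hev3).exists
      exact absurd (h1.trans h2) (lt_irrefl _)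
    -- part A : f (y' + ρ d) ≤ f y'
    have hfd : ∀ ρ : ℝ, 0 < ρ → f (y' + ρ • d) ≤ ((ry' : ℝ) : EReal) := by
      intro ρ hρ
      by_contra hgt
      push_neg at hgt
      obtain ⟨b, hb1, hb2⟩ := EReal.exists_between_coe_real hgt
      have hE := hengine ρ hρ b hb2
      have hz : Tendsto (fun n => ρ / N n) atTop (𝓝 0) := tendsto_const_nhds.div_atTop hNtop
      have hlim : Tendsto (fun n => (1 - ρ / N n) * ry' + (ρ / N n) * M₁) atTop
          (𝓝 ((1 - 0) * ry' + 0 * M₁)) :=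
        ((tendsto_const_nhds.sub hz).mul tendsto_const_nhds).add (hz.mul tendsto_const_nhds)
      have hb1' : (1 - (0:ℝ)) * ry' + 0 * M₁ < b := by
        have : ry' < b := by exact_mod_cast hb1
        simpa using this
      have hev4 := hlim.eventually_lt_const hb1'
      have hev5 : ∀ᶠ n in atTop, b < (1 - ρ / N n) * ry' + (ρ / N n) * M₁ := by
        filter_upwards [hE] with n hn
        have h4 : 0 ≤ ρ / N n := (div_pos hρ (hNpos n)).le
        have h5 : r n ≤ M₁ := by
          have := hrb n
          have := hs0 n
          linarith
        have h6 := mul_le_mul_of_nonneg_left h5 h4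
        linarith
      obtain ⟨n, h1, h2⟩ := (hev5.and hev4).exists
      exact absurd (h1.trans h2) (lt_irrefl _)
    have hSd0 : S d = 0 := psd_apply_eq_zero S hSsym hSpsd hABd.2
    have hfrec_le : frec d ≤ 0 := by
      refine le_of_tendsto (hfrec y' hy' d) ?_
      filter_upwards [eventually_gt_atTop (0:ℝ)] with ρ hρ
      have h1 : f (y' + ρ • d) - f y' ≤ 0 := by
        rw [hfy']
        refine EReal.sub_le_of_le_add ?_
        rw [zero_add]
        exact hfd ρ hρ
      have h2 : (0:EReal) ≤ ((ρ⁻¹ : ℝ) : EReal) := EReal.coe_nonneg.2 (inv_pos.2 hρ).le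
      have h3 : (0:EReal) ≤ -(f (y' + ρ • d) - f y') := by
        rw [← neg_zero]
        exact EReal.neg_le_neg_iff.2 h1
      have h4 := mul_nonneg h3 h2
      rw [neg_mul] at h4
      rw [← neg_zero] at h4
      exact EReal.neg_le_neg_iff.1 h4
    by_cases hzero : frec d = 0 ∧ frec (-d) = 0
    · have hdL : d ∈ L := (hLmem d).2 ⟨hABd.1, hSd0,
        fun x => translate_le hfconv hfbot hfrec hzero.1.le x,
        fun x => translate_le hfconv hfbot hfrec hzero.2.le x⟩
      have hdV : d ∈ (Lᗮ : Submodule ℝ Y) := by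
        refine IsClosed.mem_of_tendsto (Submodule.closed_of_finiteDimensional (Lᗮ)) hdconv'
          (Eventually.of_forall fun n => ?_)
        exact Submodule.smul_mem _ _ (hωK n).1
      have hdd : ⟪d, d⟫ = (0:ℝ) := (Submodule.mem_orthogonal _ d).1 hdV d hdL
      have hd0 : d = 0 := inner_self_eq_zero.1 hdd
      rw [hd0, norm_zero] at hd1
      norm_num at hd1
    · exact absurd (hass d hABd.1 hSd0 hzero) (not_lt.2 hfrec_le)
  have hKcpt : IsCompact K := Metric.isCompact_of_isClosed_isBounded hKclosed hKbd
  obtain ⟨yh, hyhK, hyhmin⟩ := lsc_exists_min_on_compact hKcpt ⟨v₀, hv₀K⟩ hFlsc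
  refine ⟨yh, ?_, ?_⟩
  · intro h
    exact hFy'top (top_le_iff.1 (((hftop_iff yh).2 h) ▸ hyhK.2))
  · intro w
    rw [hysub, hysub]
    obtain ⟨v, hvV, hvF⟩ := hproj w
    rw [← hvF]
    by_cases hle : F v ≤ F y'
    · exact hyhmin v ⟨hvV, hle⟩
    · exact (hyhK.2).trans (le_of_not_ge hle)
end
end

section
/- Assume that g0⁺(z) > 0 for every z ∈ Z such that B*z = 0, T z = 0, and not (g0⁺(z) = 0 and g0⁺(−z) = 0). Then the z-subproblem is solvable: there exists ẑ ∈ dom g such that G(ẑ) ≤ G(z) for all z ∈ Z. -/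
open scoped RealInnerProductSpace
open Filter Bornology

noncomputable section

variable {X Y Z : Type*}
variable [NormedAddCommGroup X] [InnerProductSpace ℝ X] [FiniteDimensional ℝ X]
variable [NormedAddCommGroup Y] [InnerProductSpace ℝ Y] [FiniteDimensional ℝ Y]
variable [NormedAddCommGroup Z] [InnerProductSpace ℝ Z] [FiniteDimensional ℝ Z]

/-! ### Auxiliary lemmas -/

theorem normsq_cvx {E : Type*} [NormedAddCommGroup E] [InnerProductSpace ℝ E] (p q : E) {t : ℝ}
    (h0 : 0 ≤ t) (h1 : t ≤ 1) : ‖(1-t)•p + t•q‖^2 ≤ (1-t)*‖p‖^2 + t*‖q‖^2 := by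
  have e1 : ‖(1-t)•p + t•q‖^2 = ⟪(1-t)•p + t•q, (1-t)•p + t•q⟫ := (real_inner_self_eq_norm_sq _).symm
  have e2 : ‖p‖^2 = ⟪p,p⟫ := (real_inner_self_eq_norm_sq _).symm
  have e3 : ‖q‖^2 = ⟪q,q⟫ := (real_inner_self_eq_norm_sq _).symm
  have e4 : (0:ℝ) ≤ ⟪p-q, p-q⟫ := real_inner_self_nonneg
  have e5 : ⟪q,p⟫ = ⟪p,q⟫ := real_inner_comm _ _
  rw [e1, e2, e3]
  simp only [inner_add_add_self, real_inner_smul_left, real_inner_smul_right,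
    real_inner_sub_sub_self] at *
  rw [e5]
  nlinarith [mul_nonneg (mul_nonneg h0 (sub_nonneg.2 h1)) e4]

theorem quad_cvx {E : Type*} [NormedAddCommGroup E] [InnerProductSpace ℝ E] (T : E →ₗ[ℝ] E)
    (hsym : T.IsSymmetric) (hpsd : ∀ w, 0 ≤ ⟪w, T w⟫) (m1 m2 : E) {t : ℝ}
    (h0 : 0 ≤ t) (h1 : t ≤ 1) :
    ⟪(1-t)•m1 + t•m2, T ((1-t)•m1 + t•m2)⟫ ≤ (1-t)*⟪m1, T m1⟫ + t*⟪m2, T m2⟫ := by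
  have e4 := hpsd (m1 - m2)
  have e5 : ⟪m2, T m1⟫ = ⟪m1, T m2⟫ := by rw [← hsym m1 m2, real_inner_comm]
  simp only [map_add, map_smul, map_sub, inner_add_add_self, inner_add_left, inner_add_right,
    inner_sub_left, inner_sub_right, real_inner_smul_left, real_inner_smul_right] at *
  nlinarith [mul_nonneg (mul_nonneg h0 (sub_nonneg.2 h1)) e4]

theorem psd_ker {E : Type*} [NormedAddCommGroup E] [InnerProductSpace ℝ E] (T : E →ₗ[ℝ] E)
    (hsym : T.IsSymmetric) (hpsd : ∀ w, 0 ≤ ⟪w, T w⟫) (d : E) (h : ⟪d, T d⟫ = 0) : T d = 0 := by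
  by_contra hne
  have hn : (0:ℝ) < ‖T d‖^2 := pow_pos (norm_pos_iff.mpr hne) 2
  set C : ℝ := ⟪T d, T (T d)⟫ with hC
  have hC0 : 0 ≤ C := hpsd _
  set ε : ℝ := ‖T d‖^2 / (C + ‖T d‖^2) with he
  have hden : 0 < C + ‖T d‖^2 := by nlinarith
  have hε : 0 < ε := div_pos hn hden
  have key := hpsd (d - ε • T d)
  have e5 : ⟪d, T (T d)⟫ = ⟪T d, T d⟫ := by rw [← hsym d (T d)]
  have e6 : ⟪T d, T d⟫ = ‖T d‖^2 := real_inner_self_eq_norm_sq _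
  simp only [map_sub, map_smul, inner_sub_left, inner_sub_right, real_inner_smul_left,
    real_inner_smul_right] at key
  rw [h] at key
  rw [e5, e6] at key
  have hid : ε * (C + ‖T d‖^2) = ‖T d‖^2 := by rw [he, div_mul_cancel₀ _ hden.ne']
  nlinarith [mul_pos hε hn, mul_pos (mul_pos hε hε) hn, key]

section Helpers
variable {Z : Type*} [NormedAddCommGroup Z] [InnerProductSpace ℝ Z]
variable {g : Z → EReal} {grec : Z → EReal}

theorem quot_mono (g : Z → EReal)
    (hconv : ∀ u v : Z, ∀ a b : ℝ, 0 ≤ a → 0 ≤ b → a + b = 1 →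
      g (a • u + b • v) ≤ (a : EReal) * g u + (b : EReal) * g v)
    (hbot : ∀ u, g u ≠ ⊥) {u₀ : Z} {c : ℝ} (h0 : g u₀ = (c : ℝ)) (d : Z) {ρ₁ ρ₂ : ℝ}
    (hρ1 : 0 < ρ₁) (h12 : ρ₁ ≤ ρ₂) :
    (g (u₀ + ρ₁ • d) - (c : ℝ)) * ((ρ₁⁻¹ : ℝ) : EReal)
      ≤ (g (u₀ + ρ₂ • d) - (c : ℝ)) * ((ρ₂⁻¹ : ℝ) : EReal) := by
  have hρ2 : 0 < ρ₂ := lt_of_lt_of_le hρ1 h12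
  rcases eq_or_ne (g (u₀ + ρ₂ • d)) ⊤ with h2 | h2
  · rw [h2]
    rw [EReal.top_sub_coe]
    rw [EReal.top_mul_of_pos (by exact_mod_cast inv_pos.mpr hρ2)]
    exact le_top
  · set t : ℝ := ρ₁ / ρ₂ with ht
    have ht0 : 0 ≤ t := le_of_lt (div_pos hρ1 hρ2)
    have ht1 : t ≤ 1 := (div_le_one hρ2).mpr h12
    have hcomb : (1 - t) • u₀ + t • (u₀ + ρ₂ • d) = u₀ + ρ₁ • d := by
      rw [smul_add, smul_smul]
      rw [← add_assoc]
      have : (1 - t) • u₀ + t • u₀ = u₀ := by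
        rw [← add_smul]; simp
      rw [this]
      congr 1
      rw [ht, div_mul_cancel₀ _ hρ2.ne']
    have hc := hconv u₀ (u₀ + ρ₂ • d) (1 - t) t (by linarith) ht0 (by ring)
    rw [hcomb, h0] at hc
    set x₂ : ℝ := (g (u₀ + ρ₂ • d)).toReal with hx2
    have hx2e : g (u₀ + ρ₂ • d) = (x₂ : EReal) := (EReal.coe_toReal h2 (hbot _)).symm
    rw [hx2e] at hc ⊢
    have hc' : g (u₀ + ρ₁ • d) ≤ (((1 - t) * c + t * x₂ : ℝ) : EReal) := by
      exact_mod_cast hc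
    have h1top : g (u₀ + ρ₁ • d) ≠ ⊤ :=
      (lt_of_le_of_lt hc' (EReal.coe_lt_top _)).ne
    set x₁ : ℝ := (g (u₀ + ρ₁ • d)).toReal with hx1
    have hx1e : g (u₀ + ρ₁ • d) = (x₁ : EReal) := (EReal.coe_toReal h1top (hbot _)).symm
    rw [hx1e]
    rw [hx1e] at hc'
    have hcr : x₁ ≤ (1 - t) * c + t * x₂ := by exact_mod_cast hc'
    rw [← EReal.coe_sub, ← EReal.coe_sub, ← EReal.coe_mul, ← EReal.coe_mul]
    apply EReal.coe_le_coe_iff.mpr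
    rw [ht] at hcr
    rw [← div_eq_mul_inv, ← div_eq_mul_inv, div_le_div_iff₀ hρ1 hρ2]
    have e : ρ₁ / ρ₂ * ρ₂ = ρ₁ := div_mul_cancel₀ _ hρ2.ne'
    have h2' : x₁ * ρ₂ ≤ c * ρ₂ - ρ₁ * c + ρ₁ * x₂ := by
      calc x₁ * ρ₂ ≤ ((1 - ρ₁/ρ₂)*c + ρ₁/ρ₂*x₂)*ρ₂ := mul_le_mul_of_nonneg_right hcr hρ2.le
        _ = c*ρ₂ - (ρ₁/ρ₂*ρ₂)*c + (ρ₁/ρ₂*ρ₂)*x₂ := by ring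
        _ = c*ρ₂ - ρ₁*c + ρ₁*x₂ := by rw [e]
    nlinarith [h2']

theorem quot_le_grec
    (hconv : ∀ u v : Z, ∀ a b : ℝ, 0 ≤ a → 0 ≤ b → a + b = 1 →
      g (a • u + b • v) ≤ (a : EReal) * g u + (b : EReal) * g v)
    (hbot : ∀ u, g u ≠ ⊥)
    (hgrec : ∀ u₀ : Z, g u₀ ≠ ⊤ → ∀ u : Z,
      Tendsto (fun ρ : ℝ => (g (u₀ + ρ • u) - g u₀) * ((ρ⁻¹ : ℝ) : EReal)) atTop (nhds (grec u)))
    {u₀ : Z} {c : ℝ} (h0 : g u₀ = (c : ℝ)) (d : Z) {ρ₀ : ℝ} (h : 0 < ρ₀) :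
    (g (u₀ + ρ₀ • d) - (c : ℝ)) * ((ρ₀⁻¹ : ℝ) : EReal) ≤ grec d := by
  have hlim := hgrec u₀ (by rw [h0]; exact EReal.coe_ne_top c) d
  rw [h0] at hlim
  refine ge_of_tendsto hlim ?_
  filter_upwards [eventually_ge_atTop ρ₀] with ρ hρ
  exact quot_mono g hconv hbot h0 d h hρ

theorem grec_nonpos
    (hconv : ∀ u v : Z, ∀ a b : ℝ, 0 ≤ a → 0 ≤ b → a + b = 1 →
      g (a • u + b • v) ≤ (a : EReal) * g u + (b : EReal) * g v)
    (hbot : ∀ u, g u ≠ ⊥)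
    (hgrec : ∀ u₀ : Z, g u₀ ≠ ⊤ → ∀ u : Z,
      Tendsto (fun ρ : ℝ => (g (u₀ + ρ • u) - g u₀) * ((ρ⁻¹ : ℝ) : EReal)) atTop (nhds (grec u)))
    {u₀ : Z} {c : ℝ} (h0 : g u₀ = (c : ℝ)) (d : Z) {M : ℝ}
    (hbd : ∀ ρ : ℝ, 0 < ρ → g (u₀ + ρ • d) ≤ (M : ℝ)) : grec d ≤ 0 := by
  have hlim := hgrec u₀ (by rw [h0]; exact EReal.coe_ne_top c) d
  rw [h0] at hlim
  have hlim2 : Tendsto (fun ρ : ℝ => (((M - c) * ρ⁻¹ : ℝ) : EReal)) atTop (nhds (0 : EReal)) := by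
    rw [show ((0 : EReal)) = ((0 : ℝ) : EReal) by simp]
    apply EReal.tendsto_coe.mpr
    simpa using tendsto_inv_atTop_zero.const_mul (M - c)
  refine le_of_tendsto_of_tendsto hlim hlim2 ?_
  filter_upwards [eventually_gt_atTop 0] with ρ hρ
  have h1 : g (u₀ + ρ • d) - (c : EReal) ≤ ((M - c : ℝ) : EReal) := by
    rw [EReal.coe_sub]; exact EReal.sub_le_sub (hbd ρ hρ) le_rfl
  calc (g (u₀ + ρ • d) - (c : EReal)) * ((ρ⁻¹ : ℝ) : EReal)
      ≤ ((M - c : ℝ) : EReal) * ((ρ⁻¹ : ℝ) : EReal) :=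
        mul_le_mul_of_nonneg_right h1 (by exact_mod_cast (inv_pos.mpr hρ).le)
    _ = (((M - c) * ρ⁻¹ : ℝ) : EReal) := (EReal.coe_mul _ _).symm

theorem false_of_decay
    (hconv : ∀ u v : Z, ∀ a b : ℝ, 0 ≤ a → 0 ≤ b → a + b = 1 →
      g (a • u + b • v) ≤ (a : EReal) * g u + (b : EReal) * g v)
    (hbot : ∀ u, g u ≠ ⊥)
    (hgrec : ∀ u₀ : Z, g u₀ ≠ ⊤ → ∀ u : Z,
      Tendsto (fun ρ : ℝ => (g (u₀ + ρ • u) - g u₀) * ((ρ⁻¹ : ℝ) : EReal)) atTop (nhds (grec u)))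
    {u₀ : Z} {c : ℝ} (h0 : g u₀ = (c : ℝ)) (d : Z) {M b γ : ℝ} (hγ : 0 < γ)
    (hbd : ∀ ρ : ℝ, 0 < ρ → g (u₀ + ρ • d) ≤ ((M + b * ρ - γ * ρ ^ 2 : ℝ) : EReal)) : False := by
  have hlim := hgrec u₀ (by rw [h0]; exact EReal.coe_ne_top c) d
  rw [h0] at hlim
  have hreal : Tendsto (fun ρ : ℝ => (M + b * ρ - γ * ρ ^ 2 - c) * ρ⁻¹) atTop atBot := by
    have hev : (fun ρ : ℝ => (M - c) * ρ⁻¹ + b + -(γ * ρ)) =ᶠ[atTop]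
        (fun ρ : ℝ => (M + b * ρ - γ * ρ ^ 2 - c) * ρ⁻¹) := by
      filter_upwards [eventually_gt_atTop 0] with ρ hρ
      field_simp
      ring
    refine Tendsto.congr' hev ?_
    apply Tendsto.add_atBot
    · simpa using (tendsto_inv_atTop_zero.const_mul (M - c)).add_const b
    · have h2 : Tendsto (fun ρ : ℝ => -(γ * ρ)) atTop atBot :=
        tendsto_neg_atTop_atBot.comp (tendsto_id.const_mul_atTop hγ)
      exact h2
  have hlim2 : Tendsto (fun ρ : ℝ => (((M + b * ρ - γ * ρ ^ 2 - c) * ρ⁻¹ : ℝ) : EReal)) atTop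
      (nhds (⊥ : EReal)) := by
    apply EReal.tendsto_nhds_bot_iff_real.mpr
    intro x
    filter_upwards [hreal.eventually (eventually_lt_atBot x)] with ρ hρ
    exact_mod_cast hρ
  have hgb : grec d ≤ ⊥ := by
    refine le_of_tendsto_of_tendsto hlim hlim2 ?_
    filter_upwards [eventually_gt_atTop 0] with ρ hρ
    have h1 : g (u₀ + ρ • d) - (c : EReal) ≤ ((M + b * ρ - γ * ρ ^ 2 - c : ℝ) : EReal) := by
      rw [EReal.coe_sub]; exact EReal.sub_le_sub (hbd ρ hρ) le_rfl
    calc (g (u₀ + ρ • d) - (c : EReal)) * ((ρ⁻¹ : ℝ) : EReal)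
        ≤ ((M + b * ρ - γ * ρ ^ 2 - c : ℝ) : EReal) * ((ρ⁻¹ : ℝ) : EReal) :=
          mul_le_mul_of_nonneg_right h1 (by exact_mod_cast (inv_pos.mpr hρ).le)
      _ = (((M + b * ρ - γ * ρ ^ 2 - c) * ρ⁻¹ : ℝ) : EReal) := (EReal.coe_mul _ _).symm
  have h1 := quot_le_grec hconv hbot hgrec h0 d (one_pos (α := ℝ))
  rw [one_smul] at h1
  have h2 : g (u₀ + d) - (c : EReal) = ⊥ := by
    have := le_trans h1 hgb
    simp only [inv_one, EReal.coe_one, mul_one] at this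
    exact le_bot_iff.mp this
  rw [sub_eq_add_neg, ← EReal.coe_neg] at h2
  rcases EReal.add_eq_bot_iff.mp h2 with h3 | h3
  · exact hbot _ h3
  · exact EReal.coe_ne_bot _ h3

theorem g_translate_le
    (hconv : ∀ u v : Z, ∀ a b : ℝ, 0 ≤ a → 0 ≤ b → a + b = 1 →
      g (a • u + b • v) ≤ (a : EReal) * g u + (b : EReal) * g v)
    (hbot : ∀ u, g u ≠ ⊥)
    (hgrec : ∀ u₀ : Z, g u₀ ≠ ⊤ → ∀ u : Z,
      Tendsto (fun ρ : ℝ => (g (u₀ + ρ • u) - g u₀) * ((ρ⁻¹ : ℝ) : EReal)) atTop (nhds (grec u)))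
    {u : Z} {c : ℝ} (h0 : g u = (c : ℝ)) {d : Z} (hd : grec d ≤ 0) : g (u + d) ≤ g u := by
  have h1 := quot_le_grec hconv hbot hgrec h0 d (one_pos (α := ℝ))
  rw [one_smul] at h1
  have h2 : g (u + d) - (c : EReal) ≤ 0 := by
    have := le_trans h1 hd
    simpa only [inv_one, EReal.coe_one, mul_one] using this
  rcases eq_or_ne (g (u + d)) ⊤ with ht | ht
  · rw [ht, EReal.top_sub_coe] at h2
    exact absurd h2 (by simp)
  · set x := (g (u + d)).toReal with hx
    have hxe : g (u + d) = (x : EReal) := (EReal.coe_toReal ht (hbot _)).symm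
    rw [hxe, ← EReal.coe_sub] at h2
    have : x - c ≤ 0 := by exact_mod_cast h2
    rw [hxe, h0]
    exact_mod_cast (by linarith : x ≤ c)

theorem g_translate_eq
    (hconv : ∀ u v : Z, ∀ a b : ℝ, 0 ≤ a → 0 ≤ b → a + b = 1 →
      g (a • u + b • v) ≤ (a : EReal) * g u + (b : EReal) * g v)
    (hbot : ∀ u, g u ≠ ⊥)
    (hgrec : ∀ u₀ : Z, g u₀ ≠ ⊤ → ∀ u : Z,
      Tendsto (fun ρ : ℝ => (g (u₀ + ρ • u) - g u₀) * ((ρ⁻¹ : ℝ) : EReal)) atTop (nhds (grec u)))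
    {d : Z} (hd : grec d ≤ 0) (hd' : grec (-d) ≤ 0) : ∀ u, g (u + d) = g u := by
  intro u
  apply le_antisymm
  · rcases eq_or_ne (g u) ⊤ with ht | ht
    · rw [ht]; exact le_top
    · exact g_translate_le hconv hbot hgrec ((EReal.coe_toReal ht (hbot _)).symm) hd
  · rcases eq_or_ne (g (u + d)) ⊤ with ht | ht
    · rw [ht]; exact le_top
    · have := g_translate_le hconv hbot hgrec ((EReal.coe_toReal ht (hbot _)).symm) hd'
      simpa using this

theorem g_invariant_smul
    (hconv : ∀ u v : Z, ∀ a b : ℝ, 0 ≤ a → 0 ≤ b → a + b = 1 →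
      g (a • u + b • v) ≤ (a : EReal) * g u + (b : EReal) * g v)
    (hbot : ∀ u, g u ≠ ⊥)
    {l : Z} (hl : ∀ u, g (u + l) = g u) (t : ℝ) : ∀ u, g (u + t • l) = g u := by
  have hneg : ∀ (l' : Z), (∀ u, g (u + l') = g u) → ∀ u, g (u + -l') = g u := by
    intro l' hl' u
    have h2 := hl' (u + -l')
    rw [neg_add_cancel_right] at h2
    exact h2.symm
  have hnat : ∀ (l' : Z), (∀ u, g (u + l') = g u) → ∀ n : ℕ, ∀ u, g (u + (n:ℝ) • l') = g u := by
    intro l' hl' n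
    induction n with
    | zero => simp
    | succ n ih =>
      intro u
      have hsm : ((n+1:ℕ):ℝ) • l' = (n:ℝ) • l' + l' := by
        push_cast
        rw [add_smul, one_smul]
      rw [hsm, ← add_assoc, hl', ih u]
  have hle : ∀ (l' : Z), (∀ u, g (u + l') = g u) → ∀ t : ℝ, 0 ≤ t →
      ∀ u, g u ≠ ⊤ → g (u + t • l') ≤ g u := by
    intro l' hl' t ht u hu
    set n : ℕ := ⌈t⌉₊ + 1 with hn
    have hnpos : (0:ℝ) < (n:ℝ) := by positivity
    have htn : t ≤ (n:ℝ) := le_trans (Nat.le_ceil t) (by rw [hn]; push_cast; linarith)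
    set s : ℝ := t / (n:ℝ) with hs
    have hs0 : 0 ≤ s := div_nonneg ht hnpos.le
    have hs1 : s ≤ 1 := (div_le_one hnpos).mpr htn
    have hcomb : (1 - s) • u + s • (u + (n:ℝ) • l') = u + t • l' := by
      rw [smul_add, smul_smul, ← add_assoc]
      have h1 : (1 - s) • u + s • u = u := by rw [← add_smul]; simp
      rw [h1]
      congr 1
      rw [hs, div_mul_cancel₀ _ hnpos.ne']
    have hcv := hconv u (u + (n:ℝ) • l') (1 - s) s (by linarith) hs0 (by ring)
    rw [hcomb, hnat l' hl' n u] at hcv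
    set cu : ℝ := (g u).toReal with hcu
    have hcue : g u = (cu : EReal) := (EReal.coe_toReal hu (hbot _)).symm
    rw [hcue] at hcv ⊢
    refine le_trans hcv ?_
    have : ((1 - s : ℝ) : EReal) * (cu : EReal) + ((s:ℝ) : EReal) * (cu : EReal)
        = (((1-s)*cu + s*cu : ℝ) : EReal) := by norm_cast
    rw [this]
    norm_cast
    linarith
  have key : ∀ (l' : Z), (∀ u, g (u + l') = g u) → ∀ t : ℝ, 0 ≤ t →
      ∀ u, g (u + t • l') = g u := by
    intro l' hl' t ht u
    rcases eq_or_ne (g u) ⊤ with hu | hu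
    · by_contra hne
      have hne' : g (u + t • l') ≠ ⊤ := fun hh => hne (hh.trans hu.symm)
      have h2 := hle (-l') (hneg l' hl') t ht (u + t • l') hne'
      rw [smul_neg, add_neg_cancel_right] at h2
      rw [hu] at h2
      exact hne' (top_le_iff.mp h2)
    · apply le_antisymm (hle l' hl' t ht u hu)
      have hne : g (u + t • l') ≠ ⊤ := by
        intro hh
        have h3 := hle l' hl' t ht u hu
        rw [hh] at h3
        exact hu (top_le_iff.mp h3)
      have h2 := hle (-l') (hneg l' hl') t ht (u + t • l') hne
      rw [smul_neg, add_neg_cancel_right] at h2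
      exact h2
  rcases le_total 0 t with ht | ht
  · exact key l hl t ht
  · intro u
    have h2 : u + t • l = u + (-t) • (-l) := by rw [neg_smul, smul_neg, neg_neg]
    rw [h2]
    exact key (-l) (hneg l hl) (-t) (by linarith) u

end Helpers

set_option maxHeartbeats 2000000 in
/-- **Proposition 1(a), z-part.**  If `g0⁺(w) > 0` for every `w` with `B* w = 0`, `T w = 0`
and not (`g0⁺(w) = 0` and `g0⁺(-w) = 0`), then the `z`-subproblem is solvable. -/
theorem stmt_2
    (f : Y → EReal) (g : Z → EReal)
    (hf : ProperConvexLsc f) (hg : ProperConvexLsc g)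
    (A : X →ₗ[ℝ] Y) (B : X →ₗ[ℝ] Z) (c : X)
    (σ : ℝ) (hσ : 0 < σ)
    (S : Y →ₗ[ℝ] Y) (hSsym : S.IsSymmetric) (hSpsd : ∀ w : Y, 0 ≤ ⟪w, S w⟫)
    (T : Z →ₗ[ℝ] Z) (hTsym : T.IsSymmetric) (hTpsd : ∀ w : Z, 0 ≤ ⟪w, T w⟫)
    (x' : X) (y' : Y) (z' : Z) (hy' : f y' ≠ ⊤) (hz' : g z' ≠ ⊤)
    (grec : Z → EReal) (hgrec : IsRecessionFn g grec)
    (hass : ∀ w : Z, (LinearMap.adjoint B) w = 0 → T w = 0 →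
      ¬(grec w = 0 ∧ grec (-w) = 0) → 0 < grec w) :
    ∃ zhat : Z, g zhat ≠ ⊤ ∧
      ∀ w : Z, zsub f g A B c σ T x' y' z' zhat ≤ zsub f g A B c σ T x' y' z' w := by
  classical
  obtain ⟨-, hgbot, hgconv, hglsc⟩ := hg
  have hgrec' : ∀ u₀ : Z, g u₀ ≠ ⊤ → ∀ u : Z,
      Tendsto (fun ρ : ℝ => (g (u₀ + ρ • u) - g u₀) * ((ρ⁻¹ : ℝ) : EReal)) atTop
        (nhds (grec u)) := hgrec
  set Aad : Y →ₗ[ℝ] X := LinearMap.adjoint A with hAad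
  set Bad : Z →ₗ[ℝ] X := LinearMap.adjoint B with hBad
  set φ : Z → ℝ := fun w => ⟪x', Aad y' + Bad w - c⟫ + σ / 2 * ‖Aad y' + Bad w - c‖ ^ 2
      + ⟪w - z', T (w - z')⟫ / 2 with hφ
  set H : Z → EReal := fun w => g w + ((φ w : ℝ) : EReal) with hH
  -- rewrite of the objective
  have hzsub : ∀ w, zsub f g A B c σ T x' y' z' w = f y' + H w := by
    intro w
    simp only [zsub, augL, hH, hφ, ← hAad, ← hBad]
    rw [EReal.coe_add, EReal.coe_add]
    abel
  -- continuity of φ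
  have hφcont : Continuous φ := by
    have hBc : Continuous fun w : Z => Aad y' + Bad w - c :=
      (continuous_const.add Bad.continuous_of_finiteDimensional).sub continuous_const
    have hsc : Continuous fun w : Z => w - z' := continuous_id.sub continuous_const
    have h1 : Continuous fun w : Z => (⟪x', Aad y' + Bad w - c⟫ : ℝ) :=
      continuous_const.inner hBc
    have h2 : Continuous fun w : Z => ‖Aad y' + Bad w - c‖ ^ 2 := (hBc.norm).pow 2
    have h3 : Continuous fun w : Z => (⟪w - z', T (w - z')⟫ : ℝ) :=
      hsc.inner (T.continuous_of_finiteDimensional.comp hsc)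
    rw [hφ]
    exact (h1.add (continuous_const.mul h2)).add (h3.div_const 2)
  -- lower semicontinuity of H
  have hHlsc : LowerSemicontinuous H := by
    rw [hH]
    exact hglsc.add' ((continuous_coe_real_ereal.comp hφcont).lowerSemicontinuous)
      (fun xx => EReal.continuousAt_add (Or.inr (by simp)) (Or.inr (by simp)))
  -- convexity of φ
  have hφconv : ∀ w1 w2 : Z, ∀ t : ℝ, 0 ≤ t → t ≤ 1 →
      φ ((1-t) • w1 + t • w2) ≤ (1-t) * φ w1 + t * φ w2 := by
    intro w1 w2 t h0 h1
    have e1 : Aad y' + Bad ((1-t) • w1 + t • w2) - c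
        = (1-t) • (Aad y' + Bad w1 - c) + t • (Aad y' + Bad w2 - c) := by
      simp only [map_add, map_smul]
      match_scalars <;> ring
    have e2 : ((1-t) • w1 + t • w2) - z' = (1-t) • (w1 - z') + t • (w2 - z') := by
      match_scalars <;> ring
    simp only [hφ]
    rw [e1, e2]
    have n1 := normsq_cvx (Aad y' + Bad w1 - c) (Aad y' + Bad w2 - c) h0 h1
    have q1 := quad_cvx T hTsym hTpsd (w1 - z') (w2 - z') h0 h1
    have i1 : (⟪x', (1-t) • (Aad y' + Bad w1 - c) + t • (Aad y' + Bad w2 - c)⟫ : ℝ)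
        = (1-t) * ⟪x', Aad y' + Bad w1 - c⟫ + t * ⟪x', Aad y' + Bad w2 - c⟫ := by
      rw [inner_add_right, real_inner_smul_right, real_inner_smul_right]
    rw [i1]
    have hσ2 : (0:ℝ) ≤ σ / 2 := by linarith
    nlinarith [mul_le_mul_of_nonneg_left n1 hσ2]
  -- base value
  set c0 : ℝ := (g z').toReal with hc0def
  have hc0 : g z' = (c0 : ℝ) := (EReal.coe_toReal hz' (hgbot _)).symm
  set a0 : ℝ := c0 + φ z' with ha0
  have hHz' : H z' = (a0 : EReal) := by
    simp only [hH]
    rw [hc0]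
    norm_cast
  -- convex combination bound for H
  have hHcomb : ∀ w1 w2 : Z, ∀ t : ℝ, 0 ≤ t → t ≤ 1 →
      H w1 ≤ (a0 : EReal) → H w2 ≤ (a0 : EReal) → H ((1-t) • w1 + t • w2) ≤ (a0 : EReal) := by
    intro w1 w2 t h0 h1 hw1 hw2
    have keytop : ∀ w : Z, H w ≤ (a0 : EReal) → g w ≠ ⊤ := by
      intro w hw hh
      simp only [hH] at hw
      rw [hh, EReal.top_add_coe] at hw
      exact absurd hw (by simp)
    have hg1 : g w1 = ((g w1).toReal : EReal) := (EReal.coe_toReal (keytop w1 hw1) (hgbot _)).symm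
    have hg2 : g w2 = ((g w2).toReal : EReal) := (EReal.coe_toReal (keytop w2 hw2) (hgbot _)).symm
    set c1 : ℝ := (g w1).toReal
    set c2 : ℝ := (g w2).toReal
    have hr1 : c1 + φ w1 ≤ a0 := by
      have : H w1 = ((c1 + φ w1 : ℝ) : EReal) := by
        simp only [hH]; rw [hg1]; norm_cast
      rw [this] at hw1
      exact_mod_cast hw1
    have hr2 : c2 + φ w2 ≤ a0 := by
      have : H w2 = ((c2 + φ w2 : ℝ) : EReal) := by
        simp only [hH]; rw [hg2]; norm_cast
      rw [this] at hw2
      exact_mod_cast hw2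
    have hgc := hgconv w1 w2 (1-t) t (by linarith) h0 (by ring)
    rw [hg1, hg2] at hgc
    have hgc' : g ((1-t) • w1 + t • w2) ≤ (((1-t)*c1 + t*c2 : ℝ) : EReal) := by
      refine le_trans hgc (le_of_eq ?_)
      norm_cast
    simp only [hH]
    calc g ((1-t) • w1 + t • w2) + ((φ ((1-t) • w1 + t • w2) : ℝ) : EReal)
        ≤ (((1-t)*c1 + t*c2 : ℝ) : EReal) + (((1-t) * φ w1 + t * φ w2 : ℝ) : EReal) := by
          exact add_le_add hgc' (by exact_mod_cast hφconv w1 w2 t h0 h1)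
      _ = ((((1-t)*c1 + t*c2) + ((1-t) * φ w1 + t * φ w2) : ℝ) : EReal) := by norm_cast
      _ ≤ (a0 : EReal) := by
          apply EReal.coe_le_coe_iff.mpr
          nlinarith
  -- the lineality space
  set Lset : Submodule ℝ Z :=
    { carrier := {l : Z | Bad l = 0 ∧ T l = 0 ∧ ∀ u, g (u + l) = g u}
      add_mem' := by
        rintro a b ⟨ha1, ha2, ha3⟩ ⟨hb1, hb2, hb3⟩
        refine ⟨by rw [map_add, ha1, hb1, add_zero], by rw [map_add, ha2, hb2, add_zero], ?_⟩
        intro u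
        rw [← add_assoc, hb3, ha3]
      zero_mem' := ⟨map_zero _, map_zero _, by simp⟩
      smul_mem' := by
        rintro t l ⟨h1, h2, h3⟩
        exact ⟨by rw [map_smul, h1, smul_zero], by rw [map_smul, h2, smul_zero],
          g_invariant_smul hgconv hgbot h3 t⟩ } with hLset
  have hLmem : ∀ l : Z, l ∈ Lset ↔ (Bad l = 0 ∧ T l = 0 ∧ ∀ u, g (u + l) = g u) := by
    intro l; rfl
  set K : Submodule ℝ Z := Lsetᗮ with hK
  have hKclosed : IsClosed (K : Set Z) := Submodule.isClosed_orthogonal Lset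
  -- invariance of H under Lset
  have hφinv : ∀ w l, l ∈ Lset → φ (w + l) = φ w := by
    intro w l hl
    obtain ⟨hB0, hT0, -⟩ := (hLmem l).mp hl
    have e1 : Aad y' + Bad (w + l) - c = Aad y' + Bad w - c := by
      rw [map_add, hB0, add_zero]
    have e3 : w + l - z' = (w - z') + l := by abel
    have e2 : (⟪w + l - z', T (w + l - z')⟫ : ℝ) = ⟪w - z', T (w - z')⟫ := by
      rw [e3, map_add, hT0, add_zero, inner_add_left, ← hTsym l (w - z'), hT0,
        inner_zero_left, add_zero]
    simp only [hφ]
    rw [e1, e2]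
  have hHinv : ∀ w l, l ∈ Lset → H (w + l) = H w := by
    intro w l hl
    obtain ⟨-, -, hg3⟩ := (hLmem l).mp hl
    simp only [hH]
    rw [hg3 w, hφinv w l hl]
  -- the candidate sublevel set
  set Aset : Set Z := {w : Z | w ∈ K ∧ H w ≤ (a0 : EReal)} with hAset
  have hclosed : IsClosed Aset := by
    have h1 : Aset = (K : Set Z) ∩ H ⁻¹' (Set.Iic (a0 : EReal)) := rfl
    rw [h1]
    exact hKclosed.inter (hHlsc.isClosed_preimage _)
  obtain ⟨l0, hl0, p0, hp0, hz'dec⟩ := Lset.exists_add_mem_mem_orthogonal z'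
  have hHp0 : H p0 = H z' := by
    rw [hz'dec, add_comm l0 p0, hHinv p0 l0 hl0]
  have hp0A : p0 ∈ Aset := ⟨hp0, by rw [hHp0, hHz']⟩
  -- boundedness of Aset
  have hbound : Bornology.IsBounded Aset := by
    by_contra hub
    rw [isBounded_iff_forall_norm_le] at hub
    push_neg at hub
    have hseq : ∀ k : ℕ, ∃ x, x ∈ Aset ∧ (k:ℝ) < ‖x‖ := by
      intro k
      obtain ⟨x, hx1, hx2⟩ := hub (k:ℝ)
      exact ⟨x, hx1, hx2⟩
    choose w hwA hwn using hseq
    have hwpos : ∀ k, 0 < ‖w k‖ := fun k => lt_of_le_of_lt (Nat.cast_nonneg k) (hwn k)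
    set dseq : ℕ → Z := fun k => ‖w k‖⁻¹ • w k with hdseq
    have hdmem : ∀ k, dseq k ∈ Metric.sphere (0:Z) 1 := by
      intro k
      rw [mem_sphere_zero_iff_norm]
      simp only [hdseq, norm_smul, norm_inv, norm_norm]
      rw [inv_mul_cancel₀ (hwpos k).ne']
    obtain ⟨d, hdsph, ψ, hψ, hdlim⟩ := (isCompact_sphere (0:Z) 1).tendsto_subseq hdmem
    have hnorm_t : Tendsto (fun k => ‖w (ψ k)‖) atTop atTop := by
      apply tendsto_atTop_mono (fun k => ?_) tendsto_natCast_atTop_atTop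
      have h1 := hwn (ψ k)
      have h2 : (k:ℝ) ≤ (ψ k : ℝ) := Nat.cast_le.mpr (hψ.le_apply)
      linarith
    have claim : ∀ ρ : ℝ, 0 < ρ → H (z' + ρ • d) ≤ (a0 : EReal) := by
      intro ρ hρ
      by_contra hgt
      push_neg at hgt
      set tk : ℕ → ℝ := fun k => ρ / ‖w (ψ k)‖ with htk
      have htk0 : ∀ k, 0 ≤ tk k := fun k => div_nonneg hρ.le (norm_nonneg _)
      have htklim : Tendsto tk atTop (nhds 0) := Tendsto.div_atTop tendsto_const_nhds hnorm_t
      set pk : ℕ → Z := fun k => (1 - tk k) • z' + tk k • w (ψ k) with hpk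
      have hplim : Tendsto pk atTop (nhds (z' + ρ • d)) := by
        have h1 : Tendsto (fun k => (1 - tk k) • z') atTop (nhds z') := by
          have h1' : Tendsto (fun k => 1 - tk k) atTop (nhds (1:ℝ)) := by
            simpa using (tendsto_const_nhds (x := (1:ℝ)) (f := atTop)).sub htklim
          simpa using h1'.smul_const z'
        have h2 : Tendsto (fun k => tk k • w (ψ k)) atTop (nhds (ρ • d)) := by
          have he : ∀ k, tk k • w (ψ k) = ρ • dseq (ψ k) := by
            intro k
            simp only [hdseq, htk, smul_smul, div_eq_mul_inv]
          simp only [he]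
          exact hdlim.const_smul ρ
        simpa [hpk] using h1.add h2
      have hev1 : ∀ᶠ k in atTop, tk k ≤ 1 := by
        filter_upwards [hnorm_t.eventually_ge_atTop ρ] with k hk
        rw [htk]
        exact div_le_one_of_le₀ hk (norm_nonneg _)
      have hev2 : ∀ᶠ k in atTop, (a0 : EReal) < H (pk k) :=
        hplim.eventually (hHlsc (z' + ρ • d) (a0 : EReal) hgt)
      have hev3 : ∀ᶠ k in atTop, H (pk k) ≤ (a0 : EReal) := by
        filter_upwards [hev1] with k hk1
        exact hHcomb z' (w (ψ k)) (tk k) (htk0 k) hk1 (le_of_eq hHz') (hwA (ψ k)).2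
      obtain ⟨k, h2, h3⟩ := (hev2.and hev3).exists
      exact absurd (lt_of_lt_of_le h2 h3) (lt_irrefl _)
    -- expansion of φ along the ray
    set b : X := Bad d with hb
    set vv : X := Aad y' + Bad z' - c with hvv
    set β : ℝ := ⟪x', b⟫ + σ * ⟪vv, b⟫ with hβ
    set γ2 : ℝ := σ/2 * ‖b‖^2 + ⟪d, T d⟫/2 with hγ2
    have hφρ : ∀ ρ : ℝ, φ (z' + ρ • d) = φ z' + β * ρ + γ2 * ρ^2 := by
      intro ρ
      have e1 : Aad y' + Bad (z' + ρ • d) - c = vv + ρ • b := by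
        simp only [map_add, map_smul, hvv, hb]
        abel
      have e2 : z' + ρ • d - z' = ρ • d := by abel
      have e2' : z' - z' = (0:Z) := sub_self z'
      simp only [hφ]
      rw [e1, e2, e2']
      rw [norm_add_sq_real, inner_add_right, real_inner_smul_right, real_inner_smul_right,
        map_smul, real_inner_smul_left, real_inner_smul_right, norm_smul, Real.norm_eq_abs,
        map_zero, inner_zero_left, mul_pow, sq_abs]
      simp only [hβ, hγ2]
      have e3 : ‖vv‖^2 = ⟪vv, vv⟫ := (real_inner_self_eq_norm_sq _).symm
      ring
    have hbd0 : ∀ ρ : ℝ, 0 < ρ → g (z' + ρ • d) ≤ ((a0 - φ (z' + ρ • d) : ℝ) : EReal) := by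
      intro ρ hρ
      have h1 := claim ρ hρ
      simp only [hH] at h1
      have h2 := EReal.sub_le_sub h1 (le_refl ((φ (z' + ρ • d) : ℝ) : EReal))
      rw [EReal.add_sub_cancel_right, ← EReal.coe_sub] at h2
      exact h2
    have hγ2nn : 0 ≤ γ2 := by
      have h1 : (0:ℝ) ≤ σ/2 * ‖b‖^2 := by positivity
      have h2 := hTpsd d
      rw [hγ2]
      linarith
    rcases eq_or_lt_of_le hγ2nn with hγ0 | hγpos
    · -- γ2 = 0 case
      have hbn : σ/2 * ‖b‖^2 = 0 ∧ (⟪d, T d⟫ : ℝ) = 0 := by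
        have h1 : (0:ℝ) ≤ σ/2 * ‖b‖^2 := by positivity
        have h2 := hTpsd d
        have hγ0' : σ/2 * ‖b‖^2 + (⟪d, T d⟫ : ℝ)/2 = 0 := by rw [← hγ2]; exact hγ0.symm
        constructor <;> linarith
      have hbz : b = 0 := by
        have h1 : ‖b‖^2 = 0 := by
          have := hbn.1
          have hσ2 : (0:ℝ) < σ/2 := by linarith
          exact (mul_eq_zero.mp this).resolve_left hσ2.ne'
        have h2 : ‖b‖ = 0 := by
          nlinarith [norm_nonneg b]
        exact norm_eq_zero.mp h2
      have hTd : T d = 0 := psd_ker T hTsym hTpsd d hbn.2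
      have hβz : β = 0 := by
        rw [hβ, hbz]
        simp
      have hgd : grec d ≤ 0 := by
        refine grec_nonpos hgconv hgbot hgrec' hc0 d (M := a0 - φ z') ?_
        intro ρ hρ
        have h1 := hbd0 ρ hρ
        rw [hφρ ρ, hβz, ← hγ0] at h1
        refine le_trans h1 (le_of_eq ?_)
        norm_cast
        ring
      have hBadd : Bad d = 0 := hbz
      by_cases hcs : grec d = 0 ∧ grec (-d) = 0
      · have hdL : d ∈ Lset := (hLmem d).mpr
          ⟨hBadd, hTd, g_translate_eq hgconv hgbot hgrec' hcs.1.le hcs.2.le⟩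
        have hdK : d ∈ K := by
          have hmem : ∀ᶠ k in atTop, (dseq ∘ ψ) k ∈ (K : Set Z) := by
            filter_upwards with k
            exact K.smul_mem _ (hwA (ψ k)).1
          exact hKclosed.mem_of_tendsto hdlim hmem
        have hd0 : d = 0 := by
          have h00 := (Submodule.mem_orthogonal Lset d).mp hdK d hdL
          exact inner_self_eq_zero.mp h00
        have hd1 : ‖d‖ = 1 := mem_sphere_zero_iff_norm.mp hdsph
        rw [hd0] at hd1
        simp at hd1
      · exact absurd (hass d hBadd hTd hcs) (not_lt.mpr hgd)
    · -- γ2 > 0 case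
      refine false_of_decay hgconv hgbot hgrec' hc0 d (M := a0 - φ z') (b := -β) hγpos ?_
      intro ρ hρ
      have h1 := hbd0 ρ hρ
      rw [hφρ ρ] at h1
      refine le_trans h1 (le_of_eq ?_)
      norm_cast
      ring
  -- Aset is compact and nonempty
  have hcompact : IsCompact Aset := Metric.isCompact_of_isClosed_isBounded hclosed hbound
  have hAne : Aset.Nonempty := ⟨p0, hp0A⟩
  haveI : Nonempty Aset := hAne.to_subtype
  -- minimization over Aset
  set tfam : Aset → Set Z := fun v => {w ∈ Aset | H w ≤ H v.1} with htfam
  have htd : Directed (· ⊇ ·) tfam := by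
    intro v1 v2
    rcases le_total (H v1.1) (H v2.1) with h | h
    · exact ⟨v1, fun w hw => hw, fun w hw => ⟨hw.1, le_trans hw.2 h⟩⟩
    · exact ⟨v2, fun w hw => ⟨hw.1, le_trans hw.2 h⟩, fun w hw => hw⟩
  have htn : ∀ v, (tfam v).Nonempty := fun v => ⟨v.1, v.2, le_refl _⟩
  have htcl : ∀ v, IsClosed (tfam v) := by
    intro v
    have h1 : tfam v = Aset ∩ H ⁻¹' (Set.Iic (H v.1)) := rfl
    rw [h1]
    exact hclosed.inter (hHlsc.isClosed_preimage _)
  have htc : ∀ v, IsCompact (tfam v) :=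
    fun v => hcompact.of_isClosed_subset (htcl v) (fun w hw => hw.1)
  obtain ⟨zhat, hzhat⟩ :=
    IsCompact.nonempty_iInter_of_directed_nonempty_isCompact_isClosed tfam htd htn htc htcl
  simp only [Set.mem_iInter] at hzhat
  have hzhatA : zhat ∈ Aset := (hzhat ⟨p0, hp0A⟩).1
  have hminA : ∀ v ∈ Aset, H zhat ≤ H v := fun v hv => (hzhat ⟨v, hv⟩).2
  -- global minimality
  have hmin : ∀ w : Z, H zhat ≤ H w := by
    intro w
    obtain ⟨l, hlmem, p, hpmem, hwdec⟩ := Lset.exists_add_mem_mem_orthogonal w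
    have hw : H w = H p := by rw [hwdec, add_comm l p, hHinv p l hlmem]
    rcases le_or_gt (H p) (a0 : EReal) with h | h
    · rw [hw]
      exact hminA p ⟨hpmem, h⟩
    · rw [hw]
      exact le_trans hzhatA.2 h.le
  have hgzhat : g zhat ≠ ⊤ := by
    intro hh
    have h1 := hzhatA.2
    simp only [hH] at h1
    rw [hh, EReal.top_add_coe] at h1
    exact absurd h1 (by simp)
  refine ⟨zhat, hgzhat, ?_⟩
  intro w
  rw [hzsub zhat, hzsub w]
  exact add_le_add_right (hmin w) _
end
end

section
/- Suppose f is quadratic: f(y) = (1/2)⟨y, Q y⟩ + ⟨a, y⟩ + α for a self-adjoint positive semidefinite linear operator Q : Y → Y, a ∈ Y, α ∈ ℝ. Then (i) f0⁺(y) = ⟨a, y⟩ if Q y = 0 and f0⁺(y) = +∞ if Q y ≠ 0; and (ii) if the primal problem (P) has an optimal solution, then f0⁺(y) > 0 for every y ∈ Y such that A*y = 0, S y = 0, and not (f0⁺(y) = 0 and f0⁺(−y) = 0). -/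
open scoped RealInnerProductSpace
open Filter Bornology

noncomputable section

variable {X Y Z : Type*}
variable [NormedAddCommGroup X] [InnerProductSpace ℝ X] [FiniteDimensional ℝ X]
variable [NormedAddCommGroup Y] [InnerProductSpace ℝ Y] [FiniteDimensional ℝ Y]
variable [NormedAddCommGroup Z] [InnerProductSpace ℝ Z] [FiniteDimensional ℝ Z]

lemma psd_apply_eq_zero_s6 {E : Type*} [NormedAddCommGroup E] [InnerProductSpace ℝ E]
    (Q : E →ₗ[ℝ] E) (hQsym : Q.IsSymmetric)
    (hQpsd : ∀ w : E, 0 ≤ ⟪w, Q w⟫) (w : E) (h : ⟪w, Q w⟫ = 0) : Q w = 0 := by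
  by_contra hne
  have hn : 0 < ⟪Q w, Q w⟫ := by
    rcases (real_inner_self_nonneg (x := Q w)).lt_or_eq with h' | h'
    · exact h'
    · exact absurd (inner_self_eq_zero.mp h'.symm) hne
  set n : ℝ := ⟪Q w, Q w⟫ with hndef
  set C : ℝ := ⟪Q w, Q (Q w)⟫ with hC
  have hC0 : 0 ≤ C := hQpsd _
  set t : ℝ := -n / (C + 1) with ht
  have htm : t * (C + 1) = -n := by
    rw [ht]; field_simp
  have key : 0 ≤ ⟪w + t • Q w, Q (w + t • Q w)⟫ := hQpsd _
  have hsym1 : ⟪w, Q (Q w)⟫ = n := by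
    rw [hndef, ← hQsym w (Q w)]
  have expand : ⟪w + t • Q w, Q (w + t • Q w)⟫
      = ⟪w, Q w⟫ + 2 * t * n + t ^ 2 * C := by
    simp only [map_add, map_smul, inner_add_left, inner_add_right,
      inner_smul_left, inner_smul_right, RCLike.conj_to_real, hsym1, ← hndef, ← hC]
    ring
  rw [expand, h] at key
  nlinarith [mul_nonneg key (sq_nonneg (C + 1)), mul_pos hn hn, hC0]

/-- **Remark 1 (quadratic `f`).**  If `f(y) = (1/2)⟨y, Q y⟩ + ⟨a, y⟩ + α` with `Q`
self-adjoint positive semidefinite, then (i) `f0⁺(y) = ⟨a, y⟩` when `Q y = 0` and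
`f0⁺(y) = +∞` when `Q y ≠ 0`; and (ii) if the primal problem has an optimal solution then
`f0⁺(y) > 0` for every `y` with `A* y = 0`, `S y = 0` and not
(`f0⁺(y) = 0` and `f0⁺(-y) = 0`). -/
theorem stmt_6
    (f : Y → EReal) (g : Z → EReal)
    (hf : ProperConvexLsc f) (hg : ProperConvexLsc g)
    (A : X →ₗ[ℝ] Y) (B : X →ₗ[ℝ] Z) (c : X)
    (S : Y →ₗ[ℝ] Y) (hSsym : S.IsSymmetric) (hSpsd : ∀ w : Y, 0 ≤ ⟪w, S w⟫)
    (Q : Y →ₗ[ℝ] Y) (hQsym : Q.IsSymmetric) (hQpsd : ∀ w : Y, 0 ≤ ⟪w, Q w⟫)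
    (a : Y) (α : ℝ)
    (hfq : ∀ w : Y, f w = ((⟪w, Q w⟫ / 2 + ⟪a, w⟫ + α : ℝ) : EReal))
    (frec : Y → EReal) (hfrec : IsRecessionFn f frec) :
    ((∀ w : Y, Q w = 0 → frec w = ((⟪a, w⟫ : ℝ) : EReal)) ∧
      (∀ w : Y, Q w ≠ 0 → frec w = ⊤)) ∧
    ((∃ p : Y × Z, f p.1 ≠ ⊤ ∧ g p.2 ≠ ⊤ ∧
        (LinearMap.adjoint A) p.1 + (LinearMap.adjoint B) p.2 = c ∧
        ∀ q : Y × Z, (LinearMap.adjoint A) q.1 + (LinearMap.adjoint B) q.2 = c →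
          f p.1 + g p.2 ≤ f q.1 + g q.2) →
      ∀ w : Y, (LinearMap.adjoint A) w = 0 → S w = 0 →
        ¬(frec w = 0 ∧ frec (-w) = 0) → 0 < frec w) := by
  have hf0 : f 0 ≠ ⊤ := by rw [hfq 0]; exact EReal.coe_ne_top _
  -- rewrite the quotient function as a real coercion
  have hfun : ∀ w : Y, ∀ ρ : ℝ,
      (f ((0 : Y) + ρ • w) - f 0) * ((ρ⁻¹ : ℝ) : EReal)
        = (((ρ ^ 2 * ⟪w, Q w⟫ / 2 + ρ * ⟪a, w⟫) * ρ⁻¹ : ℝ) : EReal) := by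
    intro w ρ
    rw [hfq, hfq, zero_add, ← EReal.coe_sub, ← EReal.coe_mul]
    norm_cast
    congr 1
    have h1 : ⟪ρ • w, Q (ρ • w)⟫ = ρ ^ 2 * ⟪w, Q w⟫ := by
      rw [map_smul, inner_smul_left, inner_smul_right, RCLike.conj_to_real]; ring
    have h2 : ⟪a, ρ • w⟫ = ρ * ⟪a, w⟫ := by rw [inner_smul_right]
    have h0 : ⟪(0 : Y), Q 0⟫ / 2 + ⟪a, (0 : Y)⟫ + α = α := by simp
    rw [h1, h2, h0]
    ring
  have main1 : ∀ w : Y, Q w = 0 → frec w = ((⟪a, w⟫ : ℝ) : EReal) := by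
    intro w hQw
    have hlim : Tendsto (fun ρ : ℝ => (f ((0 : Y) + ρ • w) - f 0) * ((ρ⁻¹ : ℝ) : EReal))
        atTop (nhds ((⟪a, w⟫ : ℝ) : EReal)) := by
      have hev : ∀ᶠ ρ : ℝ in atTop,
          (fun _ : ℝ => ((⟪a, w⟫ : ℝ) : EReal)) ρ
            = (f ((0 : Y) + ρ • w) - f 0) * ((ρ⁻¹ : ℝ) : EReal) := by
        filter_upwards [eventually_gt_atTop (0 : ℝ)] with ρ hρ
        rw [hfun w ρ, hQw]
        norm_cast
        simp only [inner_zero_right]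
        field_simp
        ring
      exact tendsto_const_nhds.congr' hev
    exact tendsto_nhds_unique (hfrec 0 hf0 w) hlim
  have main2 : ∀ w : Y, Q w ≠ 0 → frec w = ⊤ := by
    intro w hQw
    have hk : 0 < ⟪w, Q w⟫ := by
      rcases (hQpsd w).lt_or_eq with h' | h'
      · exact h'
      · exact absurd (psd_apply_eq_zero_s6 Q hQsym hQpsd w h'.symm) hQw
    have hreal : Tendsto (fun ρ : ℝ => ρ * (⟪w, Q w⟫ / 2) + ⟪a, w⟫) atTop atTop :=
      tendsto_atTop_add_const_right _ _
        (tendsto_id.atTop_mul_const (by linarith : (0:ℝ) < ⟪w, Q w⟫ / 2))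
    have hlim : Tendsto (fun ρ : ℝ => (f ((0 : Y) + ρ • w) - f 0) * ((ρ⁻¹ : ℝ) : EReal))
        atTop (nhds (⊤ : EReal)) := by
      rw [EReal.tendsto_nhds_top_iff_real]
      intro x
      filter_upwards [hreal.eventually_gt_atTop x, eventually_gt_atTop (0 : ℝ)] with ρ hx hρ
      rw [hfun w ρ]
      have heq : (ρ ^ 2 * ⟪w, Q w⟫ / 2 + ρ * ⟪a, w⟫) * ρ⁻¹
          = ρ * (⟪w, Q w⟫ / 2) + ⟪a, w⟫ := by
        field_simp
      rw [heq]
      exact_mod_cast hx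
    exact tendsto_nhds_unique (hfrec 0 hf0 w) hlim
  refine ⟨⟨main1, main2⟩, ?_⟩
  rintro ⟨p, hfp, hgp, hfeas, hopt⟩ w hAw hSw hne
  by_cases hQw : Q w = 0
  · -- frec w = ⟪a, w⟫; show it is positive
    rw [main1 w hQw]
    have hineq : ∀ t : ℝ, 0 ≤ t * ⟪a, w⟫ := by
      intro t
      have hcon : (LinearMap.adjoint A) (p.1 + t • w) + (LinearMap.adjoint B) p.2 = c := by
        rw [map_add, map_smul, hAw, smul_zero, add_zero, hfeas]
      have := hopt (p.1 + t • w, p.2) hcon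
      rw [hfq p.1, hfq (p.1 + t • w)] at this
      have hg1 : g p.2 ≠ ⊥ := hg.2.1 p.2
      -- turn the EReal inequality into a real one
      lift g p.2 to ℝ using ⟨hgp, hg1⟩ with gp hgpr
      rw [← EReal.coe_add, ← EReal.coe_add, EReal.coe_le_coe_iff] at this
      have hexp : ⟪p.1 + t • w, Q (p.1 + t • w)⟫ = ⟪p.1, Q p.1⟫ := by
        have hwQp : ⟪w, Q p.1⟫ = 0 := by rw [← hQsym w p.1, hQw, inner_zero_left]
        simp only [map_add, map_smul, inner_add_left, inner_add_right,
          inner_smul_left, inner_smul_right, RCLike.conj_to_real, hQw,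
          inner_zero_right, hwQp]
        ring
      have hav : ⟪a, p.1 + t • w⟫ = ⟪a, p.1⟫ + t * ⟪a, w⟫ := by
        rw [inner_add_right, inner_smul_right]
      rw [hexp, hav] at this
      linarith
    have h1 : 0 ≤ ⟪a, w⟫ := by have := hineq 1; linarith
    rcases h1.lt_or_eq with h' | h'
    · exact_mod_cast h'
    · exfalso
      apply hne
      have h2 : frec (-w) = ((⟪a, -w⟫ : ℝ) : EReal) := main1 (-w) (by rw [map_neg, hQw, neg_zero])
      constructor
      · rw [main1 w hQw, ← h']; norm_cast
      · rw [h2, inner_neg_right, ← h']; norm_num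
  · rw [main2 w hQw]; exact EReal.zero_lt_top
end
end

section
/- Let (x̄,ȳ,z̄) solve the KKT system and let {(x^k,y^k,z^k)}_{k≥0} be an infinite sequence generated by the sPADMM. Then for every k ≥ 1: Φ_k − Φ_{k+1} ≥ 2‖y_e^{k+1}‖²_{Σ_f} + 2‖z_e^{k+1}‖²_{Σ_g} + ‖y^{k+1} − y^k‖_S² + ‖z^{k+1} − z^k‖_T² + min(1, 1 − τ + τ^{−1})·σ‖A*y_e^{k+1} + B*z_e^{k+1}‖² + min(τ, 1 + τ − τ²)·σ‖B*(z^{k+1} − z^k)‖². -/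
open scoped RealInnerProductSpace
open Filter Bornology

noncomputable section

variable {X Y Z : Type*}
variable [NormedAddCommGroup X] [InnerProductSpace ℝ X] [FiniteDimensional ℝ X]
variable [NormedAddCommGroup Y] [InnerProductSpace ℝ Y] [FiniteDimensional ℝ Y]
variable [NormedAddCommGroup Z] [InnerProductSpace ℝ Z] [FiniteDimensional ℝ Z]

/-- The subdifferential `∂f(u)` of a function `f : E → ℝ ∪ {+∞}`. -/
def subdiff {E : Type*} [NormedAddCommGroup E] [InnerProductSpace ℝ E]
    (f : E → EReal) (u : E) : Set E :=
  {v | ∀ w : E, f u + ((⟪v, w - u⟫ : ℝ) : EReal) ≤ f w}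

/-- `(x, y, z) : ℕ → X × Y × Z` is a sequence generated by the sPADMM scheme with
penalty parameter `σ`, step-length `τ` and proximal terms given by `S` and `T`,
started from an initial point `(x⁰, y⁰, z⁰) ∈ X × dom f × dom g`. -/
def IsSPADMM (f : Y → EReal) (g : Z → EReal) (A : X →ₗ[ℝ] Y) (B : X →ₗ[ℝ] Z)
    (c : X) (σ τ : ℝ) (S : Y →ₗ[ℝ] Y) (T : Z →ₗ[ℝ] Z)
    (x : ℕ → X) (y : ℕ → Y) (z : ℕ → Z) : Prop :=
  f (y 0) ≠ ⊤ ∧ g (z 0) ≠ ⊤ ∧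
    (∀ k : ℕ, ∀ w : Y,
      ysub f g A B c σ S (x k) (y k) (z k) (y (k + 1))
        ≤ ysub f g A B c σ S (x k) (y k) (z k) w) ∧
    (∀ k : ℕ, ∀ w : Z,
      zsub f g A B c σ T (x k) (y (k + 1)) (z k) (z (k + 1))
        ≤ zsub f g A B c σ T (x k) (y (k + 1)) (z k) w) ∧
    (∀ k : ℕ, x (k + 1) = x k + (τ * σ) •
      ((LinearMap.adjoint A) (y (k + 1)) + (LinearMap.adjoint B) (z (k + 1)) - c))

/-- `(x̄, ȳ, z̄)` solves the KKT system:
`-A x̄ ∈ ∂f(ȳ)`, `-B x̄ ∈ ∂g(z̄)` and `A* ȳ + B* z̄ = c`. -/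
def IsKKT (f : Y → EReal) (g : Z → EReal) (A : X →ₗ[ℝ] Y) (B : X →ₗ[ℝ] Z)
    (c : X) (xb : X) (yb : Y) (zb : Z) : Prop :=
  -(A xb) ∈ subdiff f yb ∧ -(B xb) ∈ subdiff g zb ∧
    (LinearMap.adjoint A) yb + (LinearMap.adjoint B) zb = c

/-- Condition (C): either `0 < τ < (1+√5)/2`, or `τ ≥ (1+√5)/2` and
`Σ_k ‖x^{k+1} - x^k‖² < ∞`. -/
def CondC {X : Type*} [NormedAddCommGroup X] (τ : ℝ) (x : ℕ → X) : Prop :=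
  (0 < τ ∧ τ < (1 + Real.sqrt 5) / 2) ∨
    ((1 + Real.sqrt 5) / 2 ≤ τ ∧ Summable fun k : ℕ => ‖x (k + 1) - x k‖ ^ 2)

/-- `Sf` satisfies `⟨v - v', u - u'⟩ ≥ ‖u - u'‖²_{Sf}` for all `v ∈ ∂f(u)`, `v' ∈ ∂f(u')`. -/
def SubMono {E : Type*} [NormedAddCommGroup E] [InnerProductSpace ℝ E]
    (f : E → EReal) (Sf : E →ₗ[ℝ] E) : Prop :=
  ∀ u u' v v' : E, v ∈ subdiff f u → v' ∈ subdiff f u' →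
    ⟪u - u', Sf (u - u')⟫ ≤ ⟪v - v', u - u'⟫

/-- `Ψ_k := (1/(τσ))‖x^k - x̄‖² + ‖y^k - ȳ‖_S² + ‖z^k - z̄‖²_{T + σBB*}`. -/
def PsiSeq (B : X →ₗ[ℝ] Z) (σ τ : ℝ) (S : Y →ₗ[ℝ] Y) (T : Z →ₗ[ℝ] Z)
    (x : ℕ → X) (y : ℕ → Y) (z : ℕ → Z) (xb : X) (yb : Y) (zb : Z) (k : ℕ) : ℝ :=
  1 / (τ * σ) * ‖x k - xb‖ ^ 2 + ⟪y k - yb, S (y k - yb)⟫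
    + (⟪z k - zb, T (z k - zb)⟫ + σ * ‖(LinearMap.adjoint B) (z k - zb)‖ ^ 2)

/-- `Φ_k := Ψ_k + ‖z^k - z^{k-1}‖_T² + max(1-τ, 1-τ⁻¹) σ ‖A* y_e^k + B* z_e^k‖²`
(with the convention `z^{-1} = z⁰`, realized here by truncated subtraction `k - 1`). -/
def PhiSeq (A : X →ₗ[ℝ] Y) (B : X →ₗ[ℝ] Z) (σ τ : ℝ) (S : Y →ₗ[ℝ] Y) (T : Z →ₗ[ℝ] Z)
    (x : ℕ → X) (y : ℕ → Y) (z : ℕ → Z) (xb : X) (yb : Y) (zb : Z) (k : ℕ) : ℝ :=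
  PsiSeq B σ τ S T x y z xb yb zb k
    + ⟪z k - z (k - 1), T (z k - z (k - 1))⟫
    + max (1 - τ) (1 - τ⁻¹) * σ *
        ‖(LinearMap.adjoint A) (y k - yb) + (LinearMap.adjoint B) (z k - zb)‖ ^ 2

lemma subgrad_of_min {E : Type*} [NormedAddCommGroup E] [InnerProductSpace ℝ E]
    (f : E → EReal)
    (hconv : ∀ u v : E, ∀ a b : ℝ, 0 ≤ a → 0 ≤ b → a + b = 1 →
      f (a • u + b • v) ≤ (a : EReal) * f u + (b : EReal) * f v)
    (hbot : ∀ u, f u ≠ ⊥)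
    (u : E) (hu : f u ≠ ⊤) (q : E → ℝ) (G : E) (C : E → ℝ)
    (hq : ∀ w : E, ∀ t : ℝ, 0 < t → t ≤ 1 →
      q ((1 - t) • u + t • w) ≤ q u + t * ⟪G, w - u⟫ + t ^ 2 * C w)
    (hmin : ∀ w, f u + ((q u : ℝ) : EReal) ≤ f w + ((q w : ℝ) : EReal)) :
    -G ∈ subdiff f u := by
  intro w
  by_cases hw : f w = ⊤
  · rw [hw]; exact le_top
  obtain ⟨fu, hfu⟩ : ∃ r : ℝ, f u = r := ⟨(f u).toReal, (EReal.coe_toReal hu (hbot u)).symm⟩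
  obtain ⟨fw, hfw⟩ : ∃ r : ℝ, f w = r := ⟨(f w).toReal, (EReal.coe_toReal hw (hbot w)).symm⟩
  rw [hfu, hfw, ← EReal.coe_add, EReal.coe_le_coe_iff]
  have key : ∀ t : ℝ, 0 < t → t ≤ 1 → fu ≤ fw + ⟪G, w - u⟫ + t * C w := by
    intro t ht ht1
    have h1 : f u + ((q u : ℝ) : EReal) ≤ f ((1-t) • u + t • w) + ((q ((1-t) • u + t • w) : ℝ) : EReal) :=
      hmin _
    have h2 : f ((1-t) • u + t • w) ≤ ((1-t) : EReal) * f u + (t : EReal) * f w :=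
      hconv u w (1-t) t (by linarith) ht.le (by ring)
    have h3 : ((1-t) : EReal) * f u + (t : EReal) * f w = (((1-t)*fu + t*fw : ℝ) : EReal) := by
      rw [hfu, hfw]; norm_cast
    have h4 : ((q ((1-t) • u + t • w) : ℝ) : EReal) ≤ ((q u + t * ⟪G, w - u⟫ + t ^ 2 * C w : ℝ) : EReal) :=
      EReal.coe_le_coe_iff.mpr (hq w t ht ht1)
    have h5 : f u + ((q u : ℝ) : EReal) ≤
        (((1-t)*fu + t*fw : ℝ) : EReal) + ((q u + t * ⟪G, w - u⟫ + t ^ 2 * C w : ℝ) : EReal) :=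
      le_trans h1 (by rw [← h3]; exact add_le_add h2 h4)
    rw [hfu, ← EReal.coe_add, ← EReal.coe_add, EReal.coe_le_coe_iff] at h5
    have h6 : t * fu ≤ t * (fw + ⟪G, w - u⟫ + t * C w) := by nlinarith [h5]
    have := (mul_le_mul_iff_right₀ ht).mp h6
    linarith
  have : fu ≤ fw + ⟪G, w - u⟫ := by
    apply le_of_forall_pos_le_add
    intro ε hε
    set t : ℝ := min 1 (ε / (|C w| + 1)) with htdef
    have hC : 0 < |C w| + 1 := by positivity
    have ht : 0 < t := lt_min one_pos (by positivity)
    have ht1 : t ≤ 1 := min_le_left _ _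
    have h := key t ht ht1
    have h7 : t * C w ≤ ε := by
      have h8 : t * C w ≤ t * |C w| := by
        apply mul_le_mul_of_nonneg_left (le_abs_self _) ht.le
      have h9 : t ≤ ε / (|C w| + 1) := min_le_right _ _
      have h10 : t * |C w| ≤ (ε / (|C w| + 1)) * (|C w| + 1) := by
        apply mul_le_mul h9 (by linarith) (abs_nonneg _) (by positivity)
      rw [div_mul_cancel₀ _ (by positivity)] at h10
      linarith
    linarith
  rw [inner_neg_left]
  linarith

lemma quad_expand {E F : Type*} [NormedAddCommGroup E] [InnerProductSpace ℝ E]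
    [NormedAddCommGroup F] [InnerProductSpace ℝ F]
    (M : E →ₗ[ℝ] F) (Mt : F →ₗ[ℝ] E) (hM : ∀ (p : F) (h : E), ⟪p, M h⟫ = ⟪Mt p, h⟫)
    (S : E →ₗ[ℝ] E) (hS : ∀ p h : E, ⟪S p, h⟫ = ⟪p, S h⟫)
    (x' : F) (v : F) (y' : E) (κ cst : ℝ) (u w : E) (t : ℝ) :
    (⟪x', M ((1-t) • u + t • w) + v⟫ + κ/2 * ‖M ((1-t) • u + t • w) + v‖^2
      + ⟪((1-t) • u + t • w) - y', S (((1-t) • u + t • w) - y')⟫/2 + cst)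
    = (⟪x', M u + v⟫ + κ/2 * ‖M u + v‖^2 + ⟪u - y', S (u - y')⟫/2 + cst)
      + t * ⟪Mt x' + κ • Mt (M u + v) + S (u - y'), w - u⟫
      + t^2 * (κ/2 * ‖M (w-u)‖^2 + ⟪w - u, S (w - u)⟫/2) := by
  have hmid : (1-t) • u + t • w = u + t • (w - u) := by
    rw [sub_smul, one_smul, smul_sub]; abel
  rw [hmid]
  have h1 : M (u + t • (w - u)) + v = (M u + v) + t • (M (w - u)) := by
    rw [map_add, map_smul]; abel
  have h2 : (u + t • (w - u)) - y' = (u - y') + t • (w - u) := by abel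
  rw [h1, h2, norm_add_sq_real]
  simp only [map_add, map_smul, inner_add_left, inner_add_right, real_inner_smul_left,
    real_inner_smul_right, norm_smul, Real.norm_eq_abs, mul_pow, sq_abs]
  linear_combination (t * hM x' (w-u)) + (κ*t) * hM (M u) (w-u) + (κ*t) * hM v (w-u)
    - (t/2) * hS (u-y') (w-u) + (t/2) * real_inner_comm (S (u-y')) (w-u)

lemma subgrad_quad {E F : Type*} [NormedAddCommGroup E] [InnerProductSpace ℝ E]
    [NormedAddCommGroup F] [InnerProductSpace ℝ F]
    (f : E → EReal)
    (hconv : ∀ u v : E, ∀ a b : ℝ, 0 ≤ a → 0 ≤ b → a + b = 1 →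
      f (a • u + b • v) ≤ (a : EReal) * f u + (b : EReal) * f v)
    (hbot : ∀ u, f u ≠ ⊥)
    (M : E →ₗ[ℝ] F) (Mt : F →ₗ[ℝ] E) (hM : ∀ (p : F) (h : E), ⟪p, M h⟫ = ⟪Mt p, h⟫)
    (S : E →ₗ[ℝ] E) (hS : ∀ p h : E, ⟪S p, h⟫ = ⟪p, S h⟫)
    (x' : F) (v : F) (y' : E) (κ cst : ℝ) (u : E) (hu : f u ≠ ⊤)
    (hmin : ∀ w, f u + ((⟪x', M u + v⟫ + κ/2 * ‖M u + v‖^2 + ⟪u - y', S (u - y')⟫/2 + cst : ℝ) : EReal)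
      ≤ f w + ((⟪x', M w + v⟫ + κ/2 * ‖M w + v‖^2 + ⟪w - y', S (w - y')⟫/2 + cst : ℝ) : EReal)) :
    -(Mt x' + κ • Mt (M u + v) + S (u - y')) ∈ subdiff f u := by
  apply subgrad_of_min f hconv hbot u hu
    (fun w => ⟪x', M w + v⟫ + κ/2 * ‖M w + v‖^2 + ⟪w - y', S (w - y')⟫/2 + cst)
    _ (fun w => κ/2 * ‖M (w-u)‖^2 + ⟪w - u, S (w - u)⟫/2)
  · intro w t ht ht1
    exact le_of_eq (quad_expand M Mt hM S hS x' v y' κ cst u w t)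
  · exact hmin

lemma ereal_shuffle (a : EReal) (g r1 r2 r3 : ℝ) :
    a + (g:EReal) + (r1:EReal) + (r2:EReal) + (r3:EReal) = a + ((r1+r2+r3+g : ℝ):EReal) := by
  push_cast; abel

lemma ereal_shuffle2 (a : EReal) (g r1 r2 r3 : ℝ) :
    (g:EReal) + a + (r1:EReal) + (r2:EReal) + (r3:EReal) = a + ((r1+r2+r3+g : ℝ):EReal) := by
  push_cast; abel

lemma ysub_form (f : Y → EReal) (g : Z → EReal) (A : X →ₗ[ℝ] Y) (B : X →ₗ[ℝ] Z)
    (c : X) (σ : ℝ) (S : Y →ₗ[ℝ] Y) (x' : X) (y' : Y) (z' : Z) (gz : ℝ)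
    (hgz : g z' = (gz : EReal)) (w : Y) :
    ysub f g A B c σ S x' y' z' w
      = f w + ((⟪x', (LinearMap.adjoint A) w + ((LinearMap.adjoint B) z' - c)⟫
          + σ/2 * ‖(LinearMap.adjoint A) w + ((LinearMap.adjoint B) z' - c)‖^2
          + ⟪w - y', S (w - y')⟫/2 + gz : ℝ) : EReal) := by
  unfold ysub augL
  rw [hgz]
  simp only [add_sub_assoc]
  rw [ereal_shuffle]

lemma zsub_form (f : Y → EReal) (g : Z → EReal) (A : X →ₗ[ℝ] Y) (B : X →ₗ[ℝ] Z)
    (c : X) (σ : ℝ) (T : Z →ₗ[ℝ] Z) (x' : X) (y' : Y) (z' : Z) (fy : ℝ)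
    (hfy : f y' = (fy : EReal)) (w : Z) :
    zsub f g A B c σ T x' y' z' w
      = g w + ((⟪x', (LinearMap.adjoint B) w + ((LinearMap.adjoint A) y' - c)⟫
          + σ/2 * ‖(LinearMap.adjoint B) w + ((LinearMap.adjoint A) y' - c)‖^2
          + ⟪w - z', T (w - z')⟫/2 + fy : ℝ) : EReal) := by
  unfold zsub augL
  rw [hfy]
  have hcomm : ∀ (p q r : X), p + q - r = q + (p - r) := by intros; abel
  simp only [hcomm]
  rw [ereal_shuffle2]
lemma ereal_ne_top_of_add_le (a : EReal) (s R : ℝ) (h : a + (s:EReal) ≤ (R:EReal)) : a ≠ ⊤ := by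
  intro ha
  rw [ha, EReal.top_add_coe] at h
  exact (EReal.coe_ne_top R) (top_le_iff.mp h)

lemma sPADMM_fin (f : Y → EReal) (g : Z → EReal)
    (hf : ProperConvexLsc f) (hg : ProperConvexLsc g)
    (A : X →ₗ[ℝ] Y) (B : X →ₗ[ℝ] Z) (c : X) (σ τ : ℝ)
    (S : Y →ₗ[ℝ] Y) (T : Z →ₗ[ℝ] Z)
    (x : ℕ → X) (y : ℕ → Y) (z : ℕ → Z)
    (hseq : IsSPADMM f g A B c σ τ S T x y z) :
    ∀ k : ℕ, f (y k) ≠ ⊤ ∧ g (z k) ≠ ⊤ := by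
  intro k
  induction k with
  | zero => exact ⟨hseq.1, hseq.2.1⟩
  | succ k ih =>
    obtain ⟨hfk, hgk⟩ := ih
    obtain ⟨fyk, hfyk⟩ : ∃ r : ℝ, f (y k) = r := ⟨_, (EReal.coe_toReal hfk (hf.2.1 _)).symm⟩
    obtain ⟨gzk, hgzk⟩ : ∃ r : ℝ, g (z k) = r := ⟨_, (EReal.coe_toReal hgk (hg.2.1 _)).symm⟩
    have hy := hseq.2.2.1 k (y k)
    rw [ysub_form f g A B c σ S _ _ _ gzk hgzk (y (k+1)),
        ysub_form f g A B c σ S _ _ _ gzk hgzk (y k), hfyk, ← EReal.coe_add] at hy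
    have hfk1 : f (y (k+1)) ≠ ⊤ := ereal_ne_top_of_add_le _ _ _ hy
    obtain ⟨fy1, hfy1⟩ : ∃ r : ℝ, f (y (k+1)) = r := ⟨_, (EReal.coe_toReal hfk1 (hf.2.1 _)).symm⟩
    have hz := hseq.2.2.2.1 k (z k)
    rw [zsub_form f g A B c σ T _ _ _ fy1 hfy1 (z (k+1)),
        zsub_form f g A B c σ T _ _ _ fy1 hfy1 (z k), hgzk, ← EReal.coe_add] at hz
    exact ⟨hfk1, ereal_ne_top_of_add_le _ _ _ hz⟩

lemma sPADMM_subgrad_y (f : Y → EReal) (g : Z → EReal)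
    (hf : ProperConvexLsc f) (hg : ProperConvexLsc g)
    (A : X →ₗ[ℝ] Y) (B : X →ₗ[ℝ] Z) (c : X) (σ τ : ℝ)
    (S : Y →ₗ[ℝ] Y) (hSsym : S.IsSymmetric) (T : Z →ₗ[ℝ] Z)
    (x : ℕ → X) (y : ℕ → Y) (z : ℕ → Z)
    (hseq : IsSPADMM f g A B c σ τ S T x y z) (k : ℕ) :
    -(A (x k) + σ • A ((LinearMap.adjoint A) (y (k+1)) + ((LinearMap.adjoint B) (z k) - c))
        + S (y (k+1) - y k)) ∈ subdiff f (y (k+1)) := by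
  have hfin := sPADMM_fin f g hf hg A B c σ τ S T x y z hseq
  obtain ⟨gzk, hgzk⟩ : ∃ r : ℝ, g (z k) = r :=
    ⟨_, (EReal.coe_toReal (hfin k).2 (hg.2.1 _)).symm⟩
  have hM : ∀ (p : X) (h : Y), ⟪p, (LinearMap.adjoint A) h⟫ = ⟪A p, h⟫ := by
    intro p h
    rw [real_inner_comm, LinearMap.adjoint_inner_left, real_inner_comm]
  exact subgrad_quad f hf.2.2.1 hf.2.1 (LinearMap.adjoint A) A hM S hSsym
    (x k) ((LinearMap.adjoint B) (z k) - c) (y k) σ gzk (y (k+1)) (hfin (k+1)).1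
    (fun w => by
      rw [← ysub_form f g A B c σ S _ _ _ gzk hgzk (y (k+1)),
          ← ysub_form f g A B c σ S _ _ _ gzk hgzk w]
      exact hseq.2.2.1 k w)

lemma sPADMM_subgrad_z (f : Y → EReal) (g : Z → EReal)
    (hf : ProperConvexLsc f) (hg : ProperConvexLsc g)
    (A : X →ₗ[ℝ] Y) (B : X →ₗ[ℝ] Z) (c : X) (σ τ : ℝ)
    (S : Y →ₗ[ℝ] Y) (T : Z →ₗ[ℝ] Z) (hTsym : T.IsSymmetric)
    (x : ℕ → X) (y : ℕ → Y) (z : ℕ → Z)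
    (hseq : IsSPADMM f g A B c σ τ S T x y z) (k : ℕ) :
    -(B (x k) + σ • B ((LinearMap.adjoint B) (z (k+1)) + ((LinearMap.adjoint A) (y (k+1)) - c))
        + T (z (k+1) - z k)) ∈ subdiff g (z (k+1)) := by
  have hfin := sPADMM_fin f g hf hg A B c σ τ S T x y z hseq
  obtain ⟨fy1, hfy1⟩ : ∃ r : ℝ, f (y (k+1)) = r :=
    ⟨_, (EReal.coe_toReal (hfin (k+1)).1 (hf.2.1 _)).symm⟩
  have hM : ∀ (p : X) (h : Z), ⟪p, (LinearMap.adjoint B) h⟫ = ⟪B p, h⟫ := by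
    intro p h
    rw [real_inner_comm, LinearMap.adjoint_inner_left, real_inner_comm]
  exact subgrad_quad g hg.2.2.1 hg.2.1 (LinearMap.adjoint B) B hM T hTsym
    (x k) ((LinearMap.adjoint A) (y (k+1)) - c) (z k) σ fy1 (z (k+1)) (hfin (k+1)).2
    (fun w => by
      rw [← zsub_form f g A B c σ T _ _ _ fy1 hfy1 (z (k+1)),
          ← zsub_form f g A B c σ T _ _ _ fy1 hfy1 w]
      exact hseq.2.2.2.1 k w)

set_option maxHeartbeats 2000000 in
/-- **Proposition 2, inequality (14).**  For a KKT solution `(x̄, ȳ, z̄)` and a sequence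
generated by the sPADMM, for every `k ≥ 1`:
`Φ_k - Φ_{k+1} ≥ 2‖y_e^{k+1}‖²_{Σ_f} + 2‖z_e^{k+1}‖²_{Σ_g} + ‖y^{k+1}-y^k‖_S²
+ ‖z^{k+1}-z^k‖_T² + min(1, 1-τ+τ⁻¹) σ ‖A*y_e^{k+1} + B*z_e^{k+1}‖²
+ min(τ, 1+τ-τ²) σ ‖B*(z^{k+1}-z^k)‖²`. -/
theorem stmt_14
    (f : Y → EReal) (g : Z → EReal)
    (hf : ProperConvexLsc f) (hg : ProperConvexLsc g)
    (A : X →ₗ[ℝ] Y) (B : X →ₗ[ℝ] Z) (c : X)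
    (σ τ : ℝ) (hσ : 0 < σ) (hτ : 0 < τ)
    (S : Y →ₗ[ℝ] Y) (hSsym : S.IsSymmetric) (hSpsd : ∀ w : Y, 0 ≤ ⟪w, S w⟫)
    (T : Z →ₗ[ℝ] Z) (hTsym : T.IsSymmetric) (hTpsd : ∀ w : Z, 0 ≤ ⟪w, T w⟫)
    (Sf : Y →ₗ[ℝ] Y) (hSfsym : Sf.IsSymmetric) (hSfpsd : ∀ w : Y, 0 ≤ ⟪w, Sf w⟫)
    (hSfmono : SubMono f Sf)
    (Sg : Z →ₗ[ℝ] Z) (hSgsym : Sg.IsSymmetric) (hSgpsd : ∀ w : Z, 0 ≤ ⟪w, Sg w⟫)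
    (hSgmono : SubMono g Sg)
    (xb : X) (yb : Y) (zb : Z) (hkkt : IsKKT f g A B c xb yb zb)
    (x : ℕ → X) (y : ℕ → Y) (z : ℕ → Z)
    (hseq : IsSPADMM f g A B c σ τ S T x y z) :
    ∀ k : ℕ, 1 ≤ k →
      PhiSeq A B σ τ S T x y z xb yb zb k - PhiSeq A B σ τ S T x y z xb yb zb (k + 1) ≥
        2 * ⟪y (k + 1) - yb, Sf (y (k + 1) - yb)⟫
        + 2 * ⟪z (k + 1) - zb, Sg (z (k + 1) - zb)⟫
        + ⟪y (k + 1) - y k, S (y (k + 1) - y k)⟫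
        + ⟪z (k + 1) - z k, T (z (k + 1) - z k)⟫
        + min 1 (1 - τ + τ⁻¹) * σ *
            ‖(LinearMap.adjoint A) (y (k + 1) - yb)
              + (LinearMap.adjoint B) (z (k + 1) - zb)‖ ^ 2
        + min τ (1 + τ - τ ^ 2) * σ *
            ‖(LinearMap.adjoint B) (z (k + 1) - z k)‖ ^ 2 := by
  intro k hk
  have hA1 : τ ≤ 1 → τ ≤ τ⁻¹ := fun h => by rw [inv_eq_one_div, le_div_iff₀ hτ]; nlinarith
  have hA2 : τ ≤ 1 → τ^2 ≤ 1 := fun h => by nlinarith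
  have hB1 : 1 ≤ τ → τ⁻¹ ≤ τ := fun h => by rw [inv_eq_one_div, div_le_iff₀ hτ]; nlinarith
  have hB2 : 1 ≤ τ → 1 ≤ τ^2 := fun h => by nlinarith
  obtain ⟨j, rfl⟩ : ∃ j, k = j + 1 := ⟨k - 1, (Nat.succ_pred_eq_of_pos hk).symm⟩
  have hadjA : ∀ (p : X) (q : Y), ⟪A p, q⟫ = ⟪p, (LinearMap.adjoint A) q⟫ := by
    intro p q
    rw [real_inner_comm, ← LinearMap.adjoint_inner_left]
    exact real_inner_comm _ _
  have hadjB : ∀ (p : X) (q : Z), ⟪B p, q⟫ = ⟪p, (LinearMap.adjoint B) q⟫ := by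
    intro p q
    rw [real_inner_comm, ← LinearMap.adjoint_inner_left]
    exact real_inner_comm _ _
  simp only [PhiSeq, PsiSeq, Nat.add_sub_cancel]
  simp only [← real_inner_self_eq_norm_sq]
  set u := y (j+1+1) - yb with hu
  set v := z (j+1+1) - zb with hv
  set dy := y (j+1+1) - y (j+1) with hdy
  set dz := z (j+1+1) - z (j+1) with hdz
  set dz' := z (j+1) - z j with hdz'
  set e := x (j+1) - xb with he
  set rk := (LinearMap.adjoint A) (y (j+1) - yb) + (LinearMap.adjoint B) (z (j+1) - zb) with hrk
  have hy1 : y (j+1) - yb = u - dy := by rw [hu, hdy]; abel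
  have hz1 : z (j+1) - zb = v - dz := by rw [hv, hdz]; abel
  rw [hy1, hz1, map_sub (LinearMap.adjoint B) v dz]
  set a := (LinearMap.adjoint A) u with ha
  set b := (LinearMap.adjoint B) v with hb
  set d := (LinearMap.adjoint B) dz with hd
  have hres : (LinearMap.adjoint A) (y (j+1+1)) + (LinearMap.adjoint B) (z (j+1+1)) - c
      = a + b := by
    rw [← hkkt.2.2, ha, hb, hu, hv]; simp only [map_sub]; abel
  have hx2 : x (j+1+1) - xb = e + (τ*σ) • (a + b) := by
    rw [hseq.2.2.2.2 (j+1), hres, he]; abel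
  rw [hx2]
  have hxe : ⟪e + (τ*σ) • (a+b), e + (τ*σ) • (a+b)⟫
      = ⟪e,e⟫ + 2*(τ*σ)*(⟪e,a⟫+⟪e,b⟫) + (τ*σ)^2*(⟪a,a⟫+2*⟪a,b⟫+⟪b,b⟫) := by
    simp only [inner_add_left, inner_add_right, real_inner_smul_left, real_inner_smul_right]
    linear_combination (-(τ*σ))*real_inner_comm a e - (τ*σ)*real_inner_comm b e
      - (τ*σ)^2*real_inner_comm b a
  rw [hxe]
  have hτσ : (τ*σ) ≠ 0 := by positivity
  have hbridge : 1/(τ*σ) * (⟪e,e⟫ + 2*(τ*σ)*(⟪e,a⟫+⟪e,b⟫) + (τ*σ)^2*(⟪a,a⟫+2*⟪a,b⟫+⟪b,b⟫))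
      = 1/(τ*σ)*⟪e,e⟫ + 2*(⟪e,a⟫+⟪e,b⟫) + (τ*σ)*(⟪a,a⟫+2*⟪a,b⟫+⟪b,b⟫) := by
    field_simp
  rw [hbridge]
  have hSud : ⟪u - dy, S (u - dy)⟫ = ⟪u, S u⟫ - 2*⟪dy, S u⟫ + ⟪dy, S dy⟫ := by
    rw [map_sub]; simp only [inner_sub_left, inner_sub_right]
    linear_combination -real_inner_comm dy (S u) + hSsym u dy
  have hTvd : ⟪v - dz, T (v - dz)⟫ = ⟪v, T v⟫ - 2*⟪dz, T v⟫ + ⟪dz, T dz⟫ := by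
    rw [map_sub]; simp only [inner_sub_left, inner_sub_right]
    linear_combination -real_inner_comm dz (T v) + hTsym v dz
  have hbd : ⟪b - d, b - d⟫ = ⟪b,b⟫ - 2*⟪b,d⟫ + ⟪d,d⟫ := by
    simp only [inner_sub_left, inner_sub_right]
    linear_combination real_inner_comm d b
  have hab : ⟪a+b, a+b⟫ = ⟪a,a⟫+2*⟪a,b⟫+⟪b,b⟫ := by
    simp only [inner_add_left, inner_add_right]
    linear_combination -real_inner_comm b a
  rw [hSud, hTvd, hbd, hab]
  -- inequality 1
  have m1 := hSfmono (y (j+1+1)) yb _ _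
    (sPADMM_subgrad_y f g hf hg A B c σ τ S hSsym T x y z hseq (j+1)) hkkt.1
  rw [← hu] at m1
  have hveca : (LinearMap.adjoint A) (y (j+1+1)) + ((LinearMap.adjoint B) (z (j+1)) - c)
      = a + b - d := by
    rw [← hkkt.2.2, ha, hb, hd, hu, hv, hdz]; simp only [map_sub]; abel
  have hG1 : -(A (x (j+1)) + σ • A ((LinearMap.adjoint A) (y (j+1+1))
        + ((LinearMap.adjoint B) (z (j+1)) - c)) + S (y (j+1+1) - y (j+1))) - -(A xb)
      = -(A e + σ • A (a + b - d) + S dy) := by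
    rw [hveca, he, hdy]; simp only [map_sub]; abel
  rw [hG1] at m1
  have e1 : ⟪u, Sf u⟫ ≤ -(⟪e, a⟫ + σ*(⟪a,a⟫+⟪a,b⟫-⟪a,d⟫) + ⟪dy, S u⟫) := by
    refine le_trans m1 (le_of_eq ?_)
    simp only [inner_neg_left, inner_add_left, inner_sub_left, real_inner_smul_left,
      map_add, map_sub]
    rw [hadjA e u, hadjA a u, hadjA b u, hadjA d u, ← ha, hSsym dy u]
    rw [real_inner_comm b a, real_inner_comm d a]
  -- inequality 2
  have m2 := hSgmono (z (j+1+1)) zb _ _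
    (sPADMM_subgrad_z f g hf hg A B c σ τ S T hTsym x y z hseq (j+1)) hkkt.2.1
  rw [← hv] at m2
  have hvecb : (LinearMap.adjoint B) (z (j+1+1)) + ((LinearMap.adjoint A) (y (j+1+1)) - c)
      = a + b := by
    rw [← hkkt.2.2, ha, hb, hu, hv]; simp only [map_sub]; abel
  have hG2 : -(B (x (j+1)) + σ • B ((LinearMap.adjoint B) (z (j+1+1))
        + ((LinearMap.adjoint A) (y (j+1+1)) - c)) + T (z (j+1+1) - z (j+1))) - -(B xb)
      = -(B e + σ • B (a + b) + T dz) := by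
    rw [hvecb, he, hdz]; simp only [map_sub]; abel
  rw [hG2] at m2
  have e2 : ⟪v, Sg v⟫ ≤ -(⟪e, b⟫ + σ*(⟪a,b⟫+⟪b,b⟫) + ⟪dz, T v⟫) := by
    refine le_trans m2 (le_of_eq ?_)
    simp only [inner_neg_left, inner_add_left, real_inner_smul_left, map_add]
    rw [hadjB e v, hadjB a v, hadjB b v, ← hb, hTsym dz v]
  -- inequality 3
  have m3 := hSgmono (z (j+1+1)) (z (j+1)) _ _
    (sPADMM_subgrad_z f g hf hg A B c σ τ S T hTsym x y z hseq (j+1))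
    (sPADMM_subgrad_z f g hf hg A B c σ τ S T hTsym x y z hseq j)
  rw [← hdz] at m3
  have hrkres : (LinearMap.adjoint A) (y (j+1)) + (LinearMap.adjoint B) (z (j+1)) - c = rk := by
    rw [← hkkt.2.2, hrk]; simp only [map_sub]; abel
  have hrkres2 : (LinearMap.adjoint B) (z (j+1)) + ((LinearMap.adjoint A) (y (j+1)) - c) = rk := by
    rw [← hkkt.2.2, hrk]; simp only [map_sub]; abel
  have hG3 : -(B (x (j+1)) + σ • B ((LinearMap.adjoint B) (z (j+1+1))
        + ((LinearMap.adjoint A) (y (j+1+1)) - c)) + T (z (j+1+1) - z (j+1)))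
      - -(B (x j) + σ • B ((LinearMap.adjoint B) (z (j+1))
        + ((LinearMap.adjoint A) (y (j+1)) - c)) + T (z (j+1) - z j))
      = -((τ*σ) • B rk + σ • B (a + b - rk) + (T dz - T dz')) := by
    rw [hseq.2.2.2.2 j, hrkres, hvecb, hrkres2, ← hdz, ← hdz']
    simp only [map_add, map_smul, map_sub, smul_sub, smul_add]
    abel
  rw [hG3] at m3
  have e3 : 0 ≤ -((τ*σ)*⟪rk, d⟫ + σ*(⟪a,d⟫+⟪b,d⟫-⟪rk,d⟫) + (⟪dz, T dz⟫ - ⟪dz', T dz⟫)) := by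
    refine le_trans (hSgpsd dz) (le_trans m3 (le_of_eq ?_))
    simp only [inner_neg_left, inner_add_left, inner_sub_left, real_inner_smul_left,
      map_add, map_sub]
    rw [hadjB rk dz, hadjB a dz, hadjB b dz, ← hd, hTsym dz dz, hTsym dz' dz]
  -- inequality 4
  have e4 : 2*⟪dz', T dz⟫ ≤ ⟪dz', T dz'⟫ + ⟪dz, T dz⟫ := by
    have h := hTpsd (dz' - dz)
    simp only [map_sub, inner_sub_left, inner_sub_right] at h
    have hc : ⟪dz, T dz'⟫ = ⟪dz', T dz⟫ := by
      rw [real_inner_comm, hTsym]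
    linarith
  have hinv : τ * τ⁻¹ = 1 := mul_inv_cancel₀ hτ.ne'
  rcases le_total τ 1 with h1 | h1
  · have hτi : τ ≤ τ⁻¹ := hA1 h1
    have hmax : max (1-τ) (1-τ⁻¹) = 1-τ := max_eq_left (by linarith)
    have hm1 : min 1 (1-τ+τ⁻¹) = 1 := min_eq_left (by linarith)
    have hm2 : min τ (1+τ-τ^2) = τ := min_eq_left (by linarith [hA2 h1])
    rw [hmax, hm1, hm2]
    have hsq : 0 ≤ σ*(1-τ)*(⟪rk,rk⟫ - 2*⟪rk,d⟫ + ⟪d,d⟫) := by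
      have hq : (0:ℝ) ≤ ⟪rk - d, rk - d⟫ := real_inner_self_nonneg
      have hqe : ⟪rk - d, rk - d⟫ = ⟪rk,rk⟫ - 2*⟪rk,d⟫ + ⟪d,d⟫ := by
        simp only [inner_sub_left, inner_sub_right]
        linear_combination real_inner_comm d rk
      rw [hqe] at hq
      exact mul_nonneg (mul_nonneg hσ.le (by linarith)) hq
    linarith [e1, e2, e3, e4, hsq]
  · have hτi : τ⁻¹ ≤ τ := hB1 h1
    have hmax : max (1-τ) (1-τ⁻¹) = 1-τ⁻¹ := max_eq_right (by linarith)
    have hm1 : min 1 (1-τ+τ⁻¹) = 1-τ+τ⁻¹ := min_eq_right (by linarith)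
    have hm2 : min τ (1+τ-τ^2) = 1+τ-τ^2 := min_eq_right (by linarith [hB2 h1])
    rw [hmax, hm1, hm2]
    have hsq : 0 ≤ σ*(τ-1)*τ*⟪d,d⟫ + 2*σ*(τ-1)*⟪rk,d⟫ + (σ*⟪rk,rk⟫ - σ*τ⁻¹*⟪rk,rk⟫) := by
      have hq : (0:ℝ) ≤ ⟪τ•d + rk, τ•d + rk⟫ := real_inner_self_nonneg
      have hqe : ⟪τ•d + rk, τ•d + rk⟫ = τ^2*⟪d,d⟫ + 2*τ*⟪rk,d⟫ + ⟪rk,rk⟫ := by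
        simp only [inner_add_left, inner_add_right, real_inner_smul_left, real_inner_smul_right]
        linear_combination τ*real_inner_comm rk d
      rw [hqe] at hq
      have h5 : 0 ≤ σ*(τ-1)*τ⁻¹ :=
        mul_nonneg (mul_nonneg hσ.le (by linarith)) (inv_nonneg.2 hτ.le)
      have h6 := mul_nonneg h5 hq
      have h7 : σ*(τ-1)*τ⁻¹*(τ^2*⟪d,d⟫ + 2*τ*⟪rk,d⟫ + ⟪rk,rk⟫)
          = σ*(τ-1)*τ*⟪d,d⟫ + 2*σ*(τ-1)*⟪rk,d⟫ + (σ*⟪rk,rk⟫ - σ*τ⁻¹*⟪rk,rk⟫) := by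
        field_simp
      rw [h7] at h6
      exact h6
    linarith [e1, e2, e3, e4, hsq]
end
end

section
/- Let (x̄,ȳ,z̄) solve the KKT system and let {(x^k,y^k,z^k)}_{k≥0} be an infinite sequence generated by the sPADMM. Then for every k ≥ 1: Ψ_k − Ψ_{k+1} ≥ 2‖y_e^{k+1}‖²_{Σ_f} + 2‖z_e^{k+1}‖²_{Σ_g} + ‖y^{k+1} − y^k‖_S² + ‖z^{k+1} − z^k‖_T² + (1 − τ)σ‖A*y_e^{k+1} + B*z_e^{k+1}‖² + σ‖A*y_e^{k+1} + B*z_e^{k}‖². -/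
open scoped RealInnerProductSpace
open Filter Bornology

noncomputable section

variable {X Y Z : Type*}
variable [NormedAddCommGroup X] [InnerProductSpace ℝ X] [FiniteDimensional ℝ X]
variable [NormedAddCommGroup Y] [InnerProductSpace ℝ Y] [FiniteDimensional ℝ Y]
variable [NormedAddCommGroup Z] [InnerProductSpace ℝ Z] [FiniteDimensional ℝ Z]

set_option linter.unusedSectionVars false
set_option maxHeartbeats 1000000

section Helpers

variable {E X : Type*} [NormedAddCommGroup E] [InnerProductSpace ℝ E]
    [NormedAddCommGroup X] [InnerProductSpace ℝ X]
    [FiniteDimensional ℝ E] [FiniteDimensional ℝ X]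

lemma ereal_cancel' {a b : EReal} {r s : ℝ} (h : a + (r : EReal) ≤ b + ((r + s : ℝ) : EReal)) :
    a ≤ b + (s : EReal) := by
  have h2 : a + (r : EReal) ≤ (b + (s : EReal)) + (r : EReal) := by
    rw [add_assoc]
    convert h using 2
    rw [← EReal.coe_add]
    ring_nf
  exact (EReal.addLECancellable_coe r).add_le_add_iff_right.mp h2

lemma ereal_min_subdiff (f : E → EReal)
    (hconv : ∀ u v : E, ∀ a b : ℝ, 0 ≤ a → 0 ≤ b → a + b = 1 →
      f (a • u + b • v) ≤ (a : EReal) * f u + (b : EReal) * f v)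
    (hbot : ∀ u, f u ≠ ⊥) (m : E) (hm : f m ≠ ⊤) (p : E) (Q : E → ℝ)
    (hmin : ∀ w : E, ∀ t : ℝ, 0 < t → t ≤ 1 →
      f m ≤ f ((1 - t) • m + t • w) + ((t * ⟪p, w - m⟫ + t ^ 2 * Q w : ℝ) : EReal)) :
    -p ∈ subdiff f m := by
  intro w
  by_cases hfw : f w = ⊤
  · simp [hfw]
  lift f m to ℝ using ⟨hm, hbot m⟩ with fm hfm
  lift f w to ℝ using ⟨hfw, hbot w⟩ with fw hfw'
  rw [← EReal.coe_add, EReal.coe_le_coe_iff]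
  have key : ∀ ε : ℝ, 0 < ε → fm + ⟪-p, w - m⟫ ≤ fw + ε := by
    intro ε hε
    set t : ℝ := min 1 (ε / (|Q w| + 1)) with ht
    have hQpos : (0:ℝ) < |Q w| + 1 := by positivity
    have ht0 : 0 < t := lt_min one_pos (by positivity)
    have ht1 : t ≤ 1 := min_le_left _ _
    have h1 := hmin w t ht0 ht1
    have h2 := hconv m w (1 - t) t (by linarith) ht0.le (by ring)
    rw [← hfm, ← hfw'] at h2
    rw [← EReal.coe_mul, ← EReal.coe_mul, ← EReal.coe_add] at h2
    have h3 : (fm : EReal) ≤ (((1 - t) * fm + t * fw) + (t * ⟪p, w - m⟫ + t ^ 2 * Q w) : ℝ) := by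
      calc (fm : EReal) ≤ _ := h1
      _ ≤ _ := by
        rw [EReal.coe_add]
        exact (add_le_add h2 le_rfl).trans_eq (by simp only [EReal.coe_add])
    rw [EReal.coe_le_coe_iff] at h3
    have h4 : fm ≤ fw + ⟪p, w - m⟫ + t * Q w := by
      nlinarith [h3, ht0]
    have h5 : t * Q w ≤ ε := by
      have hle : t ≤ ε / (|Q w| + 1) := min_le_right _ _
      have : Q w ≤ |Q w| + 1 := by
        have := le_abs_self (Q w); linarith
      calc t * Q w ≤ t * (|Q w| + 1) := by nlinarith [ht0.le]
      _ ≤ (ε / (|Q w| + 1)) * (|Q w| + 1) := by nlinarith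
      _ = ε := by field_simp
    rw [inner_neg_left]
    linarith
  by_contra hcon
  push_neg at hcon
  have := key ((fm + ⟪-p, w - m⟫ - fw) / 2) (by linarith)
  linarith

lemma AAsym' (A : X →ₗ[ℝ] E) (w m : E) :
    ⟪A ((LinearMap.adjoint A) w), m⟫ = ⟪A ((LinearMap.adjoint A) m), w⟫ := by
  calc ⟪A ((LinearMap.adjoint A) w), m⟫ = ⟪(LinearMap.adjoint A) m, (LinearMap.adjoint A) w⟫ := by
        rw [real_inner_comm]; exact (LinearMap.adjoint_inner_left A _ m).symm
    _ = ⟪w, A ((LinearMap.adjoint A) m)⟫ := by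
        rw [real_inner_comm]; exact LinearMap.adjoint_inner_left A _ w
    _ = ⟪A ((LinearMap.adjoint A) m), w⟫ := real_inner_comm _ _

lemma quad_expand' (σ : ℝ) (A : X →ₗ[ℝ] E) (O : E →ₗ[ℝ] E) (hO : O.IsSymmetric)
    (x' b : X) (w₀ m w : E) (t : ℝ) :
    (⟪x', (LinearMap.adjoint A) ((1-t) • m + t • w) + b⟫
      + σ / 2 * ‖(LinearMap.adjoint A) ((1-t) • m + t • w) + b‖ ^ 2
      + ⟪((1-t) • m + t • w) - w₀, O (((1-t) • m + t • w) - w₀)⟫ / 2)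
    = (⟪x', (LinearMap.adjoint A) m + b⟫ + σ / 2 * ‖(LinearMap.adjoint A) m + b‖ ^ 2
        + ⟪m - w₀, O (m - w₀)⟫ / 2)
      + t * ⟪A (x' + σ • ((LinearMap.adjoint A) m + b)) + O (m - w₀), w - m⟫
      + t ^ 2 * (σ / 2 * ‖(LinearMap.adjoint A) (w - m)‖ ^ 2
          + ⟪w - m, O (w - m)⟫ / 2) := by
  have hmw : ((1-t) • m + t • w) = m + t • (w - m) := by module
  rw [hmw]
  have r1 := AAsym' A w m
  have r2 : ⟪m, A b⟫ = ⟪A b, m⟫ := real_inner_comm _ _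
  have r3 : ⟪w, A b⟫ = ⟪A b, w⟫ := real_inner_comm _ _
  have d1 : ⟪O m, w⟫ = ⟪m, O w⟫ := hO m w
  have d2 : ⟪O w₀, w⟫ = ⟪w₀, O w⟫ := hO w₀ w
  have d3 : ⟪O m, m⟫ = ⟪m, O m⟫ := hO m m
  have d4 : ⟪O w₀, m⟫ = ⟪w₀, O m⟫ := hO w₀ m
  have d5 : ⟪m, O w₀⟫ = ⟪w₀, O m⟫ := (hO m w₀).symm.trans (real_inner_comm _ _)
  have d6 : ⟪w, O w₀⟫ = ⟪w₀, O w⟫ := (hO w w₀).symm.trans (real_inner_comm _ _)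
  have d7 : ⟪w, O m⟫ = ⟪m, O w⟫ := (hO w m).symm.trans (real_inner_comm _ _)
  simp only [map_add, map_smul, map_sub, ← real_inner_self_eq_norm_sq,
    inner_add_left, inner_add_right, inner_smul_left, inner_smul_right, inner_sub_left,
    inner_sub_right, LinearMap.adjoint_inner_left, LinearMap.adjoint_inner_right,
    RCLike.inner_apply, conj_trivial]
  rw [r1, r2, r3, d1, d2, d3, d4, d5, d6, d7]
  ring

lemma key_subdiff (f : E → EReal)
    (hconv : ∀ u v : E, ∀ a b : ℝ, 0 ≤ a → 0 ≤ b → a + b = 1 →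
      f (a • u + b • v) ≤ (a : EReal) * f u + (b : EReal) * f v)
    (hbot : ∀ u, f u ≠ ⊥) (σ : ℝ) (A : X →ₗ[ℝ] E) (O : E →ₗ[ℝ] E) (hO : O.IsSymmetric)
    (x' b : X) (w₀ m : E) (hm : f m ≠ ⊤) (C : ℝ)
    (hmin : ∀ w : E,
      f m + ((C + (⟪x', (LinearMap.adjoint A) m + b⟫
          + σ / 2 * ‖(LinearMap.adjoint A) m + b‖ ^ 2
          + ⟪m - w₀, O (m - w₀)⟫ / 2) : ℝ) : EReal)
      ≤ f w + ((C + (⟪x', (LinearMap.adjoint A) w + b⟫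
          + σ / 2 * ‖(LinearMap.adjoint A) w + b‖ ^ 2
          + ⟪w - w₀, O (w - w₀)⟫ / 2) : ℝ) : EReal)) :
    -(A (x' + σ • ((LinearMap.adjoint A) m + b)) + O (m - w₀)) ∈ subdiff f m := by
  apply ereal_min_subdiff f hconv hbot m hm _
    (fun w => σ / 2 * ‖(LinearMap.adjoint A) (w - m)‖ ^ 2 + ⟪w - m, O (w - m)⟫ / 2)
  intro w t ht0 ht1
  have h := hmin ((1 - t) • m + t • w)
  have hq := quad_expand' σ A O hO x' b w₀ m w t
  have he : C + (⟪x', (LinearMap.adjoint A) ((1-t) • m + t • w) + b⟫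
      + σ / 2 * ‖(LinearMap.adjoint A) ((1-t) • m + t • w) + b‖ ^ 2
      + ⟪((1-t) • m + t • w) - w₀, O (((1-t) • m + t • w) - w₀)⟫ / 2)
      = (C + (⟪x', (LinearMap.adjoint A) m + b⟫
          + σ / 2 * ‖(LinearMap.adjoint A) m + b‖ ^ 2
          + ⟪m - w₀, O (m - w₀)⟫ / 2))
        + (t * ⟪A (x' + σ • ((LinearMap.adjoint A) m + b)) + O (m - w₀), w - m⟫
          + t ^ 2 * (σ / 2 * ‖(LinearMap.adjoint A) (w - m)‖ ^ 2 + ⟪w - m, O (w - m)⟫ / 2)) := by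
    rw [hq]; ring
  rw [he] at h
  exact ereal_cancel' h

lemma sym_sq' (O : E →ₗ[ℝ] E) (hO : O.IsSymmetric) (a b : E) :
    2 * ⟪O (a - b), a⟫ = ⟪a, O a⟫ - ⟪b, O b⟫ + ⟪a - b, O (a - b)⟫ := by
  have h1 : ⟪O b, a⟫ = ⟪b, O a⟫ := hO b a
  have h2 : ⟪O a, a⟫ = ⟪a, O a⟫ := hO a a
  have h3 : ⟪a, O b⟫ = ⟪b, O a⟫ := (hO a b).symm.trans (real_inner_comm _ _)
  simp only [map_sub, inner_sub_left, inner_sub_right]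
  linarith

end Helpers

lemma inner_map_adj' {E X : Type*} [NormedAddCommGroup E] [InnerProductSpace ℝ E]
    [NormedAddCommGroup X] [InnerProductSpace ℝ X]
    [FiniteDimensional ℝ E] [FiniteDimensional ℝ X]
    (A : X →ₗ[ℝ] E) (q : X) (e : E) : ⟪A q, e⟫ = ⟪q, (LinearMap.adjoint A) e⟫ := by
  rw [real_inner_comm, (LinearMap.adjoint_inner_left A q e).symm, real_inner_comm]

lemma ereal_shape' (aE : EReal) (p q r s : ℝ) :
    aE + (p : EReal) + (q : EReal) + (r : EReal) + (s : EReal)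
      = aE + ((p + (q + r + s) : ℝ) : EReal) := by
  simp only [EReal.coe_add, add_assoc]


/-- **Proposition 2, inequality (15).**  For a KKT solution `(x̄, ȳ, z̄)` and a sequence
generated by the sPADMM, for every `k ≥ 1`:
`Ψ_k - Ψ_{k+1} ≥ 2‖y_e^{k+1}‖²_{Σ_f} + 2‖z_e^{k+1}‖²_{Σ_g} + ‖y^{k+1}-y^k‖_S²
+ ‖z^{k+1}-z^k‖_T² + (1-τ) σ ‖A*y_e^{k+1} + B*z_e^{k+1}‖² + σ ‖A*y_e^{k+1} + B*z_e^k‖²`. -/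
theorem stmt_15
    (f : Y → EReal) (g : Z → EReal)
    (hf : ProperConvexLsc f) (hg : ProperConvexLsc g)
    (A : X →ₗ[ℝ] Y) (B : X →ₗ[ℝ] Z) (c : X)
    (σ τ : ℝ) (hσ : 0 < σ) (hτ : 0 < τ)
    (S : Y →ₗ[ℝ] Y) (hSsym : S.IsSymmetric) (hSpsd : ∀ w : Y, 0 ≤ ⟪w, S w⟫)
    (T : Z →ₗ[ℝ] Z) (hTsym : T.IsSymmetric) (hTpsd : ∀ w : Z, 0 ≤ ⟪w, T w⟫)
    (Sf : Y →ₗ[ℝ] Y) (hSfsym : Sf.IsSymmetric) (hSfpsd : ∀ w : Y, 0 ≤ ⟪w, Sf w⟫)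
    (hSfmono : SubMono f Sf)
    (Sg : Z →ₗ[ℝ] Z) (hSgsym : Sg.IsSymmetric) (hSgpsd : ∀ w : Z, 0 ≤ ⟪w, Sg w⟫)
    (hSgmono : SubMono g Sg)
    (xb : X) (yb : Y) (zb : Z) (hkkt : IsKKT f g A B c xb yb zb)
    (x : ℕ → X) (y : ℕ → Y) (z : ℕ → Z)
    (hseq : IsSPADMM f g A B c σ τ S T x y z) :
    ∀ k : ℕ, 1 ≤ k →
      PsiSeq B σ τ S T x y z xb yb zb k - PsiSeq B σ τ S T x y z xb yb zb (k + 1) ≥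
        2 * ⟪y (k + 1) - yb, Sf (y (k + 1) - yb)⟫
        + 2 * ⟪z (k + 1) - zb, Sg (z (k + 1) - zb)⟫
        + ⟪y (k + 1) - y k, S (y (k + 1) - y k)⟫
        + ⟪z (k + 1) - z k, T (z (k + 1) - z k)⟫
        + (1 - τ) * σ *
            ‖(LinearMap.adjoint A) (y (k + 1) - yb)
              + (LinearMap.adjoint B) (z (k + 1) - zb)‖ ^ 2
        + σ * ‖(LinearMap.adjoint A) (y (k + 1) - yb)
              + (LinearMap.adjoint B) (z k - zb)‖ ^ 2 := by
  intro k _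
  obtain ⟨hf_ex, hf_bot, hf_conv, -⟩ := hf
  obtain ⟨hg_ex, hg_bot, hg_conv, -⟩ := hg
  obtain ⟨hfy0, hgz0, hymin, hzmin, hxup⟩ := hseq
  obtain ⟨hkkt1, hkkt2, hc⟩ := hkkt
  -- finiteness of objective values along the iterates
  have hfin : ∀ n : ℕ, f (y n) ≠ ⊤ ∧ g (z n) ≠ ⊤ := by
    intro n
    induction n with
    | zero => exact ⟨hfy0, hgz0⟩
    | succ n ih =>
      obtain ⟨ihf, ihg⟩ := ih
      lift f (y n) to ℝ using ⟨ihf, hf_bot _⟩ with fyn hfyn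
      lift g (z n) to ℝ using ⟨ihg, hg_bot _⟩ with gzn hgzn
      have hfy1 : f (y (n+1)) ≠ ⊤ := by
        intro htop
        have hl : ysub f g A B c σ S (x n) (y n) (z n) (y (n+1)) = ⊤ := by
          rw [ysub, augL, htop]
          rw [EReal.top_add_of_ne_bot (hg_bot _), EReal.top_add_coe, EReal.top_add_coe,
            EReal.top_add_coe]
        have hr : ysub f g A B c σ S (x n) (y n) (z n) (y n) ≠ ⊤ := by
          rw [ysub, augL, ← hfyn, ← hgzn]
          simp only [← EReal.coe_add]
          exact EReal.coe_ne_top _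
        exact hr (top_le_iff.mp (hl ▸ hymin n (y n)))
      have hgz1 : g (z (n+1)) ≠ ⊤ := by
        intro htop
        lift f (y (n+1)) to ℝ using ⟨hfy1, hf_bot _⟩ with fy1 hfy1'
        have hl : zsub f g A B c σ T (x n) (y (n+1)) (z n) (z (n+1)) = ⊤ := by
          rw [zsub, augL, htop, ← hfy1']
          rw [EReal.coe_add_top, EReal.top_add_coe, EReal.top_add_coe, EReal.top_add_coe]
        have hr : zsub f g A B c σ T (x n) (y (n+1)) (z n) (z n) ≠ ⊤ := by
          rw [zsub, augL, ← hfy1', ← hgzn]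
          simp only [← EReal.coe_add]
          exact EReal.coe_ne_top _
        exact hr (top_le_iff.mp (hl ▸ hzmin n (z n)))
      exact ⟨hfy1, hgz1⟩
  have hfyk1 := (hfin (k+1)).1
  have hgzk := (hfin k).2
  have hgzk1 := (hfin (k+1)).2
  lift g (z k) to ℝ using ⟨hgzk, hg_bot _⟩ with gzk hgzk'
  lift f (y (k+1)) to ℝ using ⟨hfyk1, hf_bot _⟩ with fyk1 hfyk1'
  -- subdifferential characterization of the y-update
  have hYmem : -(A (x k + σ • ((LinearMap.adjoint A) (y (k+1))
        + ((LinearMap.adjoint B) (z k) - c))) + S (y (k+1) - y k)) ∈ subdiff f (y (k+1)) := by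
    apply key_subdiff f hf_conv hf_bot σ A S hSsym (x k) ((LinearMap.adjoint B) (z k) - c)
      (y k) (y (k+1)) (by rw [← hfyk1']; exact EReal.coe_ne_top _) gzk
    intro w
    have h := hymin k w
    rw [ysub, ysub, augL, augL, ← hgzk'] at h
    simp only [add_sub_assoc] at h
    rw [ereal_shape', ereal_shape'] at h
    exact h
  -- subdifferential characterization of the z-update
  have hZmem : -(B (x k + σ • ((LinearMap.adjoint B) (z (k+1))
        + ((LinearMap.adjoint A) (y (k+1)) - c))) + T (z (k+1) - z k)) ∈ subdiff g (z (k+1)) := by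
    apply key_subdiff g hg_conv hg_bot σ B T hTsym (x k) ((LinearMap.adjoint A) (y (k+1)) - c)
      (z k) (z (k+1)) hgzk1 fyk1
    intro w
    have h := hzmin k w
    rw [zsub, zsub, augL, augL, ← hfyk1'] at h
    have hsw : ∀ w' : Z, (LinearMap.adjoint A) (y (k+1)) + (LinearMap.adjoint B) w' - c
        = (LinearMap.adjoint B) w' + ((LinearMap.adjoint A) (y (k+1)) - c) := fun w' => by abel
    rw [hsw (z (k+1)), hsw w] at h
    have hcm : ∀ b' : EReal, ((fyk1 : ℝ) : EReal) + b' = b' + ((fyk1 : ℝ) : EReal) :=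
      fun b' => add_comm _ _
    rw [hcm (g (z (k+1))), hcm (g w)] at h
    rw [ereal_shape', ereal_shape'] at h
    exact h
  -- abbreviate error vectors
  have hr1 : (LinearMap.adjoint A) (y (k+1)) + (LinearMap.adjoint B) (z (k+1)) - c
      = (LinearMap.adjoint A) (y (k+1) - yb) + (LinearMap.adjoint B) (z (k+1) - zb) := by
    rw [← hc]; simp only [map_sub]; abel
  have hr2 : (LinearMap.adjoint A) (y (k+1)) + ((LinearMap.adjoint B) (z k) - c)
      = (LinearMap.adjoint A) (y (k+1) - yb) + (LinearMap.adjoint B) (z k - zb) := by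
    rw [← hc]; simp only [map_sub]; abel
  have hr3 : (LinearMap.adjoint B) (z (k+1)) + ((LinearMap.adjoint A) (y (k+1)) - c)
      = (LinearMap.adjoint A) (y (k+1) - yb) + (LinearMap.adjoint B) (z (k+1) - zb) := by
    rw [← hc]; simp only [map_sub]; abel
  rw [hr2] at hYmem
  rw [hr3] at hZmem
  have hmono1 := hSfmono (y (k+1)) yb _ _ hYmem hkkt1
  have hmono2 := hSgmono (z (k+1)) zb _ _ hZmem hkkt2
  have hFexp : ⟪(-(A (x k + σ • ((LinearMap.adjoint A) (y (k+1) - yb)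
          + (LinearMap.adjoint B) (z k - zb))) + S (y (k+1) - y k))) - (-(A xb)),
        y (k+1) - yb⟫
      = -⟪x k - xb, (LinearMap.adjoint A) (y (k+1) - yb)⟫
        - σ * ⟪(LinearMap.adjoint A) (y (k+1) - yb) + (LinearMap.adjoint B) (z k - zb),
            (LinearMap.adjoint A) (y (k+1) - yb)⟫
        - ⟪S (y (k+1) - y k), y (k+1) - yb⟫ := by
    simp only [inner_sub_left, inner_neg_left, inner_add_left, map_add, map_smul,
      inner_smul_left, RCLike.inner_apply, conj_trivial, inner_map_adj' A]
    ring
  have hGexp : ⟪(-(B (x k + σ • ((LinearMap.adjoint A) (y (k+1) - yb)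
          + (LinearMap.adjoint B) (z (k+1) - zb))) + T (z (k+1) - z k))) - (-(B xb)),
        z (k+1) - zb⟫
      = -⟪x k - xb, (LinearMap.adjoint B) (z (k+1) - zb)⟫
        - σ * ⟪(LinearMap.adjoint A) (y (k+1) - yb) + (LinearMap.adjoint B) (z (k+1) - zb),
            (LinearMap.adjoint B) (z (k+1) - zb)⟫
        - ⟪T (z (k+1) - z k), z (k+1) - zb⟫ := by
    simp only [inner_sub_left, inner_neg_left, inner_add_left, map_add, map_smul,
      inner_smul_left, RCLike.inner_apply, conj_trivial, inner_map_adj' B]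
    ring
  rw [hFexp] at hmono1
  rw [hGexp] at hmono2
  have hτσ : τ * σ ≠ 0 := by positivity
  have hxk1 : x (k+1) - xb = (x k - xb) + (τ*σ) • ((LinearMap.adjoint A) (y (k+1) - yb)
      + (LinearMap.adjoint B) (z (k+1) - zb)) := by
    rw [hxup k, hr1]; abel
  have hnorm : ‖(x k - xb) + (τ*σ) • ((LinearMap.adjoint A) (y (k+1) - yb)
        + (LinearMap.adjoint B) (z (k+1) - zb))‖^2
      = ‖x k - xb‖^2 + 2*(τ*σ)*⟪x k - xb, (LinearMap.adjoint A) (y (k+1) - yb)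
          + (LinearMap.adjoint B) (z (k+1) - zb)⟫
        + (τ*σ)^2 * ‖(LinearMap.adjoint A) (y (k+1) - yb)
          + (LinearMap.adjoint B) (z (k+1) - zb)‖^2 := by
    rw [norm_add_sq_real, inner_smul_right, norm_smul]
    simp only [Real.norm_eq_abs, mul_pow, sq_abs]
    ring
  have hPsidiff : PsiSeq B σ τ S T x y z xb yb zb k - PsiSeq B σ τ S T x y z xb yb zb (k + 1)
      = -2*⟪x k - xb, (LinearMap.adjoint A) (y (k+1) - yb)
            + (LinearMap.adjoint B) (z (k+1) - zb)⟫
        - (τ*σ)*‖(LinearMap.adjoint A) (y (k+1) - yb)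
            + (LinearMap.adjoint B) (z (k+1) - zb)‖^2
        + (⟪y k - yb, S (y k - yb)⟫ - ⟪y (k+1) - yb, S (y (k+1) - yb)⟫)
        + (⟪z k - zb, T (z k - zb)⟫ - ⟪z (k+1) - zb, T (z (k+1) - zb)⟫)
        + σ*(‖(LinearMap.adjoint B) (z k - zb)‖^2
            - ‖(LinearMap.adjoint B) (z (k+1) - zb)‖^2) := by
    simp only [PsiSeq]
    rw [hxk1, hnorm]
    field_simp
    ring
  have hxin : ⟪x k - xb, (LinearMap.adjoint A) (y (k+1) - yb)
        + (LinearMap.adjoint B) (z (k+1) - zb)⟫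
      = ⟪x k - xb, (LinearMap.adjoint A) (y (k+1) - yb)⟫
        + ⟪x k - xb, (LinearMap.adjoint B) (z (k+1) - zb)⟫ := inner_add_right _ _ _
  have e4 : 2*⟪(LinearMap.adjoint A) (y (k+1) - yb) + (LinearMap.adjoint B) (z k - zb),
          (LinearMap.adjoint A) (y (k+1) - yb)⟫
        + 2*⟪(LinearMap.adjoint A) (y (k+1) - yb) + (LinearMap.adjoint B) (z (k+1) - zb),
          (LinearMap.adjoint B) (z (k+1) - zb)⟫
      = ‖(LinearMap.adjoint A) (y (k+1) - yb) + (LinearMap.adjoint B) (z k - zb)‖^2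
        + ‖(LinearMap.adjoint A) (y (k+1) - yb) + (LinearMap.adjoint B) (z (k+1) - zb)‖^2
        + ‖(LinearMap.adjoint B) (z (k+1) - zb)‖^2 - ‖(LinearMap.adjoint B) (z k - zb)‖^2 := by
    simp only [← real_inner_self_eq_norm_sq, inner_add_left, inner_add_right]
    linarith [real_inner_comm ((LinearMap.adjoint A) (y (k+1) - yb))
        ((LinearMap.adjoint B) (z k - zb)),
      real_inner_comm ((LinearMap.adjoint A) (y (k+1) - yb))
        ((LinearMap.adjoint B) (z (k+1) - zb)),
      real_inner_comm ((LinearMap.adjoint B) (z (k+1) - zb))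
        ((LinearMap.adjoint B) (z k - zb))]
  have e4σ : 2*σ*⟪(LinearMap.adjoint A) (y (k+1) - yb) + (LinearMap.adjoint B) (z k - zb),
          (LinearMap.adjoint A) (y (k+1) - yb)⟫
        + 2*σ*⟪(LinearMap.adjoint A) (y (k+1) - yb) + (LinearMap.adjoint B) (z (k+1) - zb),
          (LinearMap.adjoint B) (z (k+1) - zb)⟫
      = σ*‖(LinearMap.adjoint A) (y (k+1) - yb) + (LinearMap.adjoint B) (z k - zb)‖^2
        + σ*‖(LinearMap.adjoint A) (y (k+1) - yb) + (LinearMap.adjoint B) (z (k+1) - zb)‖^2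
        + σ*‖(LinearMap.adjoint B) (z (k+1) - zb)‖^2
        - σ*‖(LinearMap.adjoint B) (z k - zb)‖^2 := by linear_combination σ * e4
  have e2S : 2*⟪S (y (k+1) - y k), y (k+1) - yb⟫
      = ⟪y (k+1) - yb, S (y (k+1) - yb)⟫ - ⟪y k - yb, S (y k - yb)⟫
        + ⟪y (k+1) - y k, S (y (k+1) - y k)⟫ := by
    have h := sym_sq' S hSsym (y (k+1) - yb) (y k - yb)
    rw [show (y (k+1) - yb) - (y k - yb) = y (k+1) - y k by abel] at h
    exact h
  have e2T : 2*⟪T (z (k+1) - z k), z (k+1) - zb⟫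
      = ⟪z (k+1) - zb, T (z (k+1) - zb)⟫ - ⟪z k - zb, T (z k - zb)⟫
        + ⟪z (k+1) - z k, T (z (k+1) - z k)⟫ := by
    have h := sym_sq' T hTsym (z (k+1) - zb) (z k - zb)
    rw [show (z (k+1) - zb) - (z k - zb) = z (k+1) - z k by abel] at h
    exact h
  rw [ge_iff_le, hPsidiff]
  linarith [hmono1, hmono2, e2S, e2T, e4σ, hxin]
end
end
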